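/- arXiv:0804.4814 — 4 statements merged into one kernel-verified Lean document; each statement's English description precedes it below -/
import Mathlib

section
/- Let G be a finite vertex-transitive graph of degree d with simple random walk transition matrix M, fix a vertex o, and let B be a random real matrix indexed by the vertices of G satisfying: B_{u,v} has mean 0 and variance 1 for every edge uv, |B_{u,v}| \le c_1 M_{u,v} almost surely, the rows (B_{u,\cdot})_u are independent, \sum_{g \in Stab(u)} B_{u,gv} = 0 for all u, v, and the law of B is invariant under Aut(G). For f(z) = \sum_j a_j z^j with radius of convergence greater than 1, define T_G(f) = |G|^{-1/2} \sum_{j\ge 2} a_j (j/2) \sum_{k_1+k_2+2=j} Tr(BM^{k_1}BM^{k_2}); define Y_j(G,v,w) = \sum_{j_1+j_2+2=j}(BM^{j_1})_{v,w}(BM^{j_2})_{w,v}, \alpha_{ij} = E[\sum_{v\ne o} Y_i(G,o,v) Y_j(G,o,v)], and H_G(f,g) = (1/2)\sum_{i,j\ge 1} i j \alpha_{ij} [z^i]f \, [z^j]g. Then for all f, g with radius of convergence greater than 1: E[T_G(f)] = 0 and E[T_G(f) T_G(g)] = H_G(f,g). -/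
open Matrix Finset MeasureTheory ProbabilityTheory

/-- Auxiliary: `Y` as a function of the matrix entries. -/
def YFm {V : Type*} [Fintype V] [DecidableEq V] (M : Matrix V V ℝ) (j : ℕ) (x z : V)
    (A : V → V → ℝ) : ℝ :=
  ∑ p ∈ (Finset.range j ×ˢ Finset.range j).filter (fun p => p.1 + p.2 + 2 = j),
    (Matrix.of A * M ^ p.1) x z * (Matrix.of A * M ^ p.2) z x

/-- For a finite vertex-transitive graph `G` and a random matrix `B` as in
the standing assumptions, for all power series `f, g` of radius of convergence `> 1`:
`E[T_G(f)] = 0` and `E[T_G(f) T_G(g)] = H_G(f,g)`, where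
`H_G(f,g) = (1/2) ∑_{i,j} i j α_{ij} [z^i]f [z^j]g`. -/
theorem covariance_eq_H_G {V : Type*} [Fintype V] [DecidableEq V]
    (G : SimpleGraph V) [DecidableRel G.Adj] (o : V) (d : ℕ)
    (hreg : ∀ v : V, G.degree v = d)
    (htrans : ∀ u v : V, ∃ e : Equiv.Perm V,
      (∀ a b : V, G.Adj (e a) (e b) ↔ G.Adj a b) ∧ e u = v)
    (M : Matrix V V ℝ)
    (hM : ∀ u v : V, M u v = if G.Adj u v then (1 : ℝ) / d else 0)
    {Ω : Type*} [MeasurableSpace Ω] (μ : Measure Ω) [IsProbabilityMeasure μ]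
    (B : Ω → Matrix V V ℝ) (hBmeas : ∀ u v, Measurable fun ω => B ω u v)
    (c₁ : ℝ) (hc₁ : 0 < c₁)
    (hmean : ∀ u v : V, G.Adj u v → (∫ ω, B ω u v ∂μ) = 0)
    (hvar : ∀ u v : V, G.Adj u v → (∫ ω, (B ω u v) ^ 2 ∂μ) = 1)
    (hBbound : ∀ᵐ ω ∂μ, ∀ u v, |B ω u v| ≤ c₁ * M u v)
    (hrows : iIndepFun (m := fun _ : V => (inferInstance : MeasurableSpace (V → ℝ)))
      (fun u ω => fun v => B ω u v) μ)
    (hstab : ∀ ω, ∀ u v : V,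
      ∑ g ∈ Finset.univ.filter
          (fun e : Equiv.Perm V =>
            (∀ a b : V, G.Adj (e a) (e b) ↔ G.Adj a b) ∧ e u = u),
        B ω u (g v) = 0)
    (hinv : ∀ e : Equiv.Perm V, (∀ a b : V, G.Adj (e a) (e b) ↔ G.Adj a b) →
      Measure.map (fun ω => fun u v : V => B ω (e u) (e v)) μ =
        Measure.map (fun ω => fun u v : V => B ω u v) μ)
    (Y : ℕ → V → V → Ω → ℝ)
    (hY : ∀ j v w ω, Y j v w ω =
      ∑ p ∈ (Finset.range j ×ˢ Finset.range j).filter (fun p => p.1 + p.2 + 2 = j),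
        (B ω * M ^ p.1) v w * (B ω * M ^ p.2) w v)
    (α : ℕ → ℕ → ℝ)
    (hα : ∀ i j, α i j = ∫ ω, ∑ v ∈ Finset.univ.erase o, Y i o v ω * Y j o v ω ∂μ)
    (a b : ℕ → ℂ)
    (hf : ∃ r : ℝ, 1 < r ∧ Summable fun k => ‖a k‖ * r ^ k)
    (hg : ∃ r : ℝ, 1 < r ∧ Summable fun k => ‖b k‖ * r ^ k)
    (Tf Tg : Ω → ℂ)
    (hTf : ∀ ω, Tf ω = ((Real.sqrt (Fintype.card V))⁻¹ : ℝ) *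
      ∑' j : ℕ, a j * ((j : ℂ) / 2) *
        (∑ p ∈ (Finset.range j ×ˢ Finset.range j).filter (fun p => p.1 + p.2 + 2 = j),
          (B ω * M ^ p.1 * (B ω) * M ^ p.2).trace : ℝ))
    (hTg : ∀ ω, Tg ω = ((Real.sqrt (Fintype.card V))⁻¹ : ℝ) *
      ∑' j : ℕ, b j * ((j : ℂ) / 2) *
        (∑ p ∈ (Finset.range j ×ˢ Finset.range j).filter (fun p => p.1 + p.2 + 2 = j),
          (B ω * M ^ p.1 * (B ω) * M ^ p.2).trace : ℝ)) :
    (∫ ω, Tf ω ∂μ) = 0 ∧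
    (∫ ω, Tf ω * Tg ω ∂μ) =
      (1 / 2 : ℂ) *
        ∑' p : ℕ × ℕ, (p.1 : ℂ) * (p.2 : ℂ) * (α p.1 p.2 : ℂ) * a p.1 * b p.2 := by
  classical
  have hn0 : 0 < Fintype.card V := Fintype.card_pos_iff.mpr ⟨o⟩
  set nV : ℝ := (Fintype.card V : ℝ) with hnV
  have hnpos : 0 < nV := by rw [hnV]; exact_mod_cast hn0
  -- basic facts about M
  have hM0 : ∀ u v, 0 ≤ M u v := by
    intro u v; rw [hM]; split <;> positivity
  have hMrow : ∀ u, ∑ v, M u v ≤ 1 := by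
    intro u
    have h1 : ∑ v, M u v = ((univ.filter (fun v => G.Adj u v)).card : ℝ) * ((1:ℝ)/d) := by
      calc ∑ v, M u v = ∑ v, if G.Adj u v then (1:ℝ)/d else 0 :=
            Finset.sum_congr rfl fun v _ => hM u v
        _ = ∑ v ∈ univ.filter (fun v => G.Adj u v), ((1:ℝ)/d) := (Finset.sum_filter _ _).symm
        _ = _ := by rw [Finset.sum_const, nsmul_eq_mul]
    have h2 : (univ.filter (fun v => G.Adj u v)).card = d := by
      rw [← SimpleGraph.neighborFinset_eq_filter]; exact hreg u
    rw [h1, h2]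
    rcases Nat.eq_zero_or_pos d with hd | hd
    · simp [hd]
    · rw [mul_one_div, div_self (by exact_mod_cast hd.ne' : (d:ℝ) ≠ 0)]
  have hMk0 : ∀ k (u v : V), 0 ≤ (M ^ k) u v := by
    intro k
    induction k with
    | zero => intro u v; rw [pow_zero, Matrix.one_apply]; split <;> norm_num
    | succ k ih =>
      intro u v; rw [pow_succ', Matrix.mul_apply]
      exact Finset.sum_nonneg fun w _ => mul_nonneg (hM0 u w) (ih w v)
  have hMk1 : ∀ k (u v : V), (M ^ k) u v ≤ 1 := by
    intro k
    induction k with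
    | zero => intro u v; rw [pow_zero, Matrix.one_apply]; split <;> norm_num
    | succ k ih =>
      intro u v; rw [pow_succ', Matrix.mul_apply]
      calc ∑ w, M u w * (M ^ k) w v ≤ ∑ w, M u w :=
            Finset.sum_le_sum fun w _ => mul_le_of_le_one_right (hM0 u w) (ih w v)
        _ ≤ 1 := hMrow u
  have hMle1 : ∀ u v, M u v ≤ 1 := by
    intro u v; have := hMk1 1 u v; rwa [pow_one] at this
  have hMe : ∀ (e : Equiv.Perm V), (∀ a b, G.Adj (e a) (e b) ↔ G.Adj a b) →
      ∀ k (a c : V), (M ^ k) (e a) (e c) = (M ^ k) a c := by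
    intro e he k
    have hMe1 : ∀ a c : V, M (e a) (e c) = M a c := by
      intro a c; rw [hM, hM]; simp only [he a c]
    induction k with
    | zero =>
      intro a c; rw [pow_zero, Matrix.one_apply, Matrix.one_apply]
      simp [e.injective.eq_iff]
    | succ k ih =>
      intro a c
      rw [pow_succ', Matrix.mul_apply, Matrix.mul_apply]
      exact (Fintype.sum_equiv e (fun w => M a w * (M ^ k) w c)
        (fun w => M (e a) w * (M ^ k) w (e c))
        (fun w => by
          show M a w * (M ^ k) w c = M (e a) (e w) * (M ^ k) (e w) (e c)
          rw [hMe1 a w, ih w c])).symm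
  -- diagonal entries of B * M^k vanish identically
  have hdiag : ∀ (ω : Ω) (k : ℕ) (v : V), (B ω * M ^ k) v v = 0 := by
    intro ω k v
    set S := Finset.univ.filter
      (fun e : Equiv.Perm V => (∀ a c, G.Adj (e a) (e c) ↔ G.Adj a c) ∧ e v = v) with hS
    have h1S : (1 : Equiv.Perm V) ∈ S := by
      simp only [hS, Finset.mem_filter, Finset.mem_univ, true_and]
      exact ⟨fun a c => by simp, rfl⟩
    have hcard : S.card ≠ 0 := Finset.card_ne_zero_of_mem h1S
    have hrepr : ∀ g ∈ S, (B ω * M ^ k) v v = ∑ x, B ω v (g x) * (M ^ k) x v := by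
      intro g hg
      simp only [hS, Finset.mem_filter, Finset.mem_univ, true_and] at hg
      obtain ⟨hgaut, hgv⟩ := hg
      rw [Matrix.mul_apply]
      refine Fintype.sum_equiv g (fun x => B ω v (g x) * (M ^ k) x v)
        (fun x => B ω v x * (M ^ k) x v) (fun x => ?_) |>.symm
      have h2 : (M ^ k) (g x) v = (M ^ k) x v := by
        conv_lhs => rw [← hgv]
        rw [hMe g hgaut]
      show B ω v (g x) * (M ^ k) x v = B ω v (g x) * (M ^ k) (g x) v
      rw [h2]
    have hz : (S.card : ℝ) * ((B ω * M ^ k) v v) = 0 := by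
      calc (S.card : ℝ) * ((B ω * M ^ k) v v)
          = ∑ _g ∈ S, (B ω * M ^ k) v v := by rw [Finset.sum_const, nsmul_eq_mul]
        _ = ∑ g ∈ S, ∑ x, B ω v (g x) * (M ^ k) x v := Finset.sum_congr rfl hrepr
        _ = ∑ x, ∑ g ∈ S, B ω v (g x) * (M ^ k) x v := Finset.sum_comm
        _ = ∑ x : V, (∑ g ∈ S, B ω v (g x)) * (M ^ k) x v := by
              refine Finset.sum_congr rfl fun x _ => ?_
              rw [Finset.sum_mul]
        _ = 0 := by
              refine Finset.sum_eq_zero fun x _ => ?_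
              rw [hstab ω v x, zero_mul]
    exact (mul_eq_zero.mp hz).resolve_left (Nat.cast_ne_zero.mpr hcard)
  -- a.e. bounds and vanishing
  have hBabs1 : ∀ (ω : Ω), (∀ u v, |B ω u v| ≤ c₁ * M u v) → ∀ u v, |B ω u v| ≤ c₁ :=
    fun ω h u v => (h u v).trans (mul_le_of_le_one_right hc₁.le (hMle1 u v))
  have hBoff : ∀ᵐ ω ∂μ, ∀ u v, ¬ G.Adj u v → B ω u v = 0 := by
    filter_upwards [hBbound] with ω h u v hadj
    have h2 := h u v
    rw [hM] at h2
    simp only [hadj, if_false, mul_zero] at h2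
    exact abs_eq_zero.mp (le_antisymm h2 (abs_nonneg _))
  have hmean' : ∀ u v, (∫ ω, B ω u v ∂μ) = 0 := by
    intro u v
    by_cases h : G.Adj u v
    · exact hmean u v h
    · rw [show (∫ ω, B ω u v ∂μ) = ∫ _ω, (0:ℝ) ∂μ from
        integral_congr_ae (by filter_upwards [hBoff] with ω hω; exact hω u v h)]
      simp
  -- measurability
  have hmeasBM : ∀ k (u v : V), Measurable (fun ω => (B ω * M ^ k) u v) := by
    intro k u v
    simp only [Matrix.mul_apply]
    exact Finset.measurable_sum _ fun x _ => (hBmeas u x).mul_const _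
  have hmeasY : ∀ i (v w : V), Measurable (Y i v w) := by
    intro i v w
    rw [show Y i v w = fun ω => ∑ p ∈ (Finset.range i ×ˢ Finset.range i).filter
        (fun p => p.1 + p.2 + 2 = i), (B ω * M ^ p.1) v w * (B ω * M ^ p.2) w v from
      funext fun ω => hY i v w ω]
    exact Finset.measurable_sum _ fun p _ => (hmeasBM p.1 v w).mul (hmeasBM p.2 w v)
  -- pointwise bounds on the good event
  have hBMbdd : ∀ (ω : Ω), (∀ u v, |B ω u v| ≤ c₁ * M u v) →
      ∀ k (u v : V), |(B ω * M ^ k) u v| ≤ nV * c₁ := by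
    intro ω hω k u v
    rw [Matrix.mul_apply]
    calc |∑ x, B ω u x * (M ^ k) x v| ≤ ∑ x, |B ω u x * (M ^ k) x v| :=
          Finset.abs_sum_le_sum_abs _ _
      _ ≤ ∑ _x : V, c₁ := by
          refine Finset.sum_le_sum fun x _ => ?_
          rw [abs_mul]
          have h1 : |B ω u x| ≤ c₁ := hBabs1 ω hω u x
          have h2 : |(M ^ k) x v| ≤ 1 := by
            rw [abs_of_nonneg (hMk0 k x v)]; exact hMk1 k x v
          calc |B ω u x| * |(M ^ k) x v| ≤ c₁ * 1 :=
                mul_le_mul h1 h2 (by positivity) hc₁.le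
            _ = c₁ := mul_one c₁
      _ = nV * c₁ := by rw [Finset.sum_const, Finset.card_univ, nsmul_eq_mul]
  have hYbdd : ∀ (ω : Ω), (∀ u v, |B ω u v| ≤ c₁ * M u v) →
      ∀ i (v w : V), |Y i v w ω| ≤ (i:ℝ)^2 * (nV * c₁)^2 := by
    intro ω hω i v w
    rw [hY]
    set ft := (Finset.range i ×ˢ Finset.range i).filter (fun p => p.1 + p.2 + 2 = i)
    calc |∑ p ∈ ft, (B ω * M ^ p.1) v w * (B ω * M ^ p.2) w v|
        ≤ ∑ p ∈ ft, |(B ω * M ^ p.1) v w * (B ω * M ^ p.2) w v| :=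
          Finset.abs_sum_le_sum_abs _ _
      _ ≤ ∑ _p ∈ ft, (nV * c₁)^2 := by
          refine Finset.sum_le_sum fun p _ => ?_
          rw [abs_mul, sq]
          exact mul_le_mul (hBMbdd ω hω p.1 v w) (hBMbdd ω hω p.2 w v) (abs_nonneg _)
            (by positivity)
      _ = (ft.card : ℝ) * (nV * c₁)^2 := by rw [Finset.sum_const, nsmul_eq_mul]
      _ ≤ (i:ℝ)^2 * (nV * c₁)^2 := by
          refine mul_le_mul_of_nonneg_right ?_ (by positivity)
          have h1 : ft.card ≤ i * i := by
            calc ft.card ≤ ((Finset.range i) ×ˢ (Finset.range i)).card :=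
                  Finset.card_filter_le _ _
              _ = i * i := by rw [Finset.card_product, Finset.card_range]
          calc (ft.card : ℝ) ≤ ((i * i : ℕ) : ℝ) := by exact_mod_cast h1
            _ = (i:ℝ)^2 := by push_cast; ring
  -- Y vanishes on the diagonal
  have hYdiag : ∀ i (v : V) (ω : Ω), Y i v v ω = 0 := by
    intro i v ω
    rw [hY]
    exact Finset.sum_eq_zero fun p _ => by rw [hdiag ω p.1 v, zero_mul]
  -- Y is symmetric
  have hYsymm : ∀ i (v w : V) (ω : Ω), Y i v w ω = Y i w v ω := by
    intro i v w ω
    rw [hY, hY]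
    refine Finset.sum_equiv (Equiv.prodComm ℕ ℕ) ?_ ?_
    · rintro ⟨p1, p2⟩
      simp only [Finset.mem_filter, Finset.mem_product, Finset.mem_range,
        Equiv.prodComm_apply, Prod.swap_prod_mk]
      omega
    · rintro ⟨p1, p2⟩ _
      simp only [Equiv.prodComm_apply, Prod.swap_prod_mk]
      ring
  -- integrability helper
  have intBdd : ∀ (f : Ω → ℝ) (C : ℝ), Measurable f → (∀ᵐ ω ∂μ, |f ω| ≤ C) →
      Integrable f μ := fun f C hm hb =>
    Integrable.mono' (integrable_const C) hm.aestronglyMeasurable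
      (by filter_upwards [hb] with ω h; rwa [Real.norm_eq_abs])
  have intB : ∀ u v : V, Integrable (fun ω => B ω u v) μ := fun u v =>
    intBdd _ c₁ (hBmeas u v) (by filter_upwards [hBbound] with ω h; exact hBabs1 ω h u v)
  have intBM : ∀ k (u v : V), Integrable (fun ω => (B ω * M ^ k) u v) μ := fun k u v =>
    intBdd _ (nV * c₁) (hmeasBM k u v)
      (by filter_upwards [hBbound] with ω h; exact hBMbdd ω h k u v)
  have intY : ∀ i (v w : V), Integrable (Y i v w) μ := fun i v w =>
    intBdd _ ((i:ℝ)^2 * (nV * c₁)^2) (hmeasY i v w)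
      (by filter_upwards [hBbound] with ω h; exact hYbdd ω h i v w)
  have intYY : ∀ i j (v w v' w' : V),
      Integrable (fun ω => Y i v w ω * Y j v' w' ω) μ := by
    intro i j v w v' w'
    refine intBdd _ (((i:ℝ)^2 * (nV * c₁)^2) * ((j:ℝ)^2 * (nV * c₁)^2))
      ((hmeasY i v w).mul (hmeasY j v' w')) ?_
    filter_upwards [hBbound] with ω h
    rw [abs_mul]
    exact mul_le_mul (hYbdd ω h i v w) (hYbdd ω h j v' w') (abs_nonneg _) (by positivity)
  -- the key vanishing lemma from independence of rows
  have key : ∀ (w y : V) (t : Finset V), w ∉ t → ∀ F : (V → V → ℝ) → ℝ, Measurable F →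
      (∀ A A' : V → V → ℝ, (∀ u ∈ t, ∀ v, A u v = A' u v) → F A = F A') →
      Integrable (fun ω => F (B ω)) μ → (∫ ω, B ω w y * F (B ω) ∂μ) = 0 := by
    intro w y t hwt F hFmeas hFdep hFint
    have hrm : ∀ u : V, Measurable (fun ω => fun v => B ω u v) :=
      fun u => measurable_pi_lambda _ fun v => hBmeas u v
    have hindep := hrows.indepFun_finset {w} t (Finset.disjoint_singleton_left.mpr hwt) hrm
    have hφm : Measurable (fun r : (↥({w} : Finset V) → V → ℝ) =>
        r ⟨w, Finset.mem_singleton_self w⟩ y) :=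
      (measurable_pi_apply _).comp (measurable_pi_apply _)
    have hextm : Measurable (fun (r : (↥t → V → ℝ)) =>
        (fun u v => if h : u ∈ t then r ⟨u, h⟩ v else 0 : V → V → ℝ)) := by
      apply measurable_pi_lambda; intro u
      apply measurable_pi_lambda; intro v
      by_cases h : u ∈ t
      · simp only [dif_pos h]
        exact (measurable_pi_apply v).comp (measurable_pi_apply _)
      · simp only [dif_neg h]; exact measurable_const
    have hψm : Measurable (fun (r : (↥t → V → ℝ)) =>
        F (fun u v => if h : u ∈ t then r ⟨u, h⟩ v else 0)) := hFmeas.comp hextm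
    have hcomp := hindep.comp hφm hψm
    have heq2 : ((fun (r : (↥t → V → ℝ)) =>
        F (fun u v => if h : u ∈ t then r ⟨u, h⟩ v else 0)) ∘
          (fun ω (i : ↥t) => fun v => B ω i v)) = fun ω => F (B ω) := by
      funext ω
      exact hFdep _ _ (fun u hu v => by simp [hu])
    rw [heq2] at hcomp
    have heq1 : ((fun r : (↥({w} : Finset V) → V → ℝ) =>
        r ⟨w, Finset.mem_singleton_self w⟩ y) ∘
          (fun ω (i : ↥({w} : Finset V)) => fun v => B ω i v)) = fun ω => B ω w y := rfl
    rw [heq1] at hcomp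
    have hmul := IndepFun.integral_mul_eq_mul_integral hcomp (intB w y).aestronglyMeasurable
      hFint.aestronglyMeasurable
    have hL : ((fun ω => B ω w y) * fun ω => F (B ω)) = fun ω => B ω w y * F (B ω) := rfl
    rw [hL] at hmul
    rw [hmul, hmean' w y, zero_mul]
  -- mean of Y vanishes
  have meanY : ∀ i (v w : V), (∫ ω, Y i v w ω ∂μ) = 0 := by
    intro i v w
    by_cases hvw : v = w
    · subst hvw; simp [hYdiag i v]
    · have hexp : ∀ ω, Y i v w ω =
          ∑ p ∈ (Finset.range i ×ˢ Finset.range i).filter (fun p => p.1 + p.2 + 2 = i),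
            ∑ y : V, B ω w y * ((M ^ p.2) y v * (B ω * M ^ p.1) v w) := by
        intro ω
        rw [hY]
        refine Finset.sum_congr rfl fun p _ => ?_
        rw [show (B ω * M ^ p.2) w v = ∑ y, B ω w y * (M ^ p.2) y v from Matrix.mul_apply,
          Finset.mul_sum]
        exact Finset.sum_congr rfl fun y _ => by ring
      rw [integral_congr_ae (Filter.Eventually.of_forall hexp)]
      have hFint : ∀ (p : ℕ × ℕ) (y : V),
          Integrable (fun ω => B ω w y * ((M ^ p.2) y v * (B ω * M ^ p.1) v w)) μ := by
        intro p y
        refine intBdd _ (c₁ * (1 * (nV * c₁)))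
          ((hBmeas w y).mul ((hmeasBM p.1 v w).const_mul _)) ?_
        filter_upwards [hBbound] with ω h
        rw [abs_mul, abs_mul]
        refine mul_le_mul (hBabs1 ω h w y) (mul_le_mul ?_ (hBMbdd ω h p.1 v w)
          (abs_nonneg _) zero_le_one) (by positivity) hc₁.le
        rw [abs_of_nonneg (hMk0 p.2 y v)]; exact hMk1 p.2 y v
      rw [integral_finset_sum _ (fun p _ => integrable_finset_sum _ (fun y _ => hFint p y))]
      refine Finset.sum_eq_zero fun p _ => ?_
      rw [integral_finset_sum _ (fun y _ => hFint p y)]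
      refine Finset.sum_eq_zero fun y _ => ?_
      refine key w y {v} (by simp [Ne.symm hvw]) 
        (fun A => (M ^ p.2) y v * (Matrix.of A * M ^ p.1) v w) ?_ ?_ ?_
      · refine Measurable.const_mul ?_ _
        simp only [Matrix.mul_apply]
        exact Finset.measurable_sum _ fun x _ =>
          ((measurable_pi_apply x).comp (measurable_pi_apply v)).mul_const _
      · intro A A' hAA
        simp only [Matrix.mul_apply, Matrix.of_apply]
        congr 1
        exact Finset.sum_congr rfl fun x _ => by
          rw [hAA v (Finset.mem_singleton_self v) x]
      · refine intBdd _ (1 * (nV * c₁)) ((hmeasBM p.1 v w).const_mul _) ?_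
        filter_upwards [hBbound] with ω h
        rw [abs_mul]
        refine mul_le_mul ?_ (hBMbdd ω h p.1 v w) (abs_nonneg _) zero_le_one
        rw [abs_of_nonneg (hMk0 p.2 y v)]; exact hMk1 p.2 y v
  have hBm : Measurable (fun ω => fun u v : V => B ω u v) :=
    measurable_pi_lambda _ fun u => measurable_pi_lambda _ fun v => hBmeas u v
  have hYFeq : ∀ j (x z : V) (ω : Ω), Y j x z ω = YFm M j x z (B ω) := by
    intro j x z ω; rw [hY]; rfl
  have hmeasAM : ∀ k (x z : V), Measurable (fun A : V → V → ℝ => (Matrix.of A * M ^ k) x z) := by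
    intro k x z
    simp only [Matrix.mul_apply, Matrix.of_apply]
    exact Finset.measurable_sum _ fun y _ =>
      ((measurable_pi_apply y).comp (measurable_pi_apply x)).mul_const _
  have hmeasYF : ∀ j (x z : V), Measurable (YFm M j x z) := by
    intro j x z
    unfold YFm
    exact Finset.measurable_sum _ fun p _ => (hmeasAM p.1 x z).mul (hmeasAM p.2 z x)
  have hAMdep : ∀ k (x z : V) (A A' : V → V → ℝ), (∀ v, A x v = A' x v) →
      (Matrix.of A * M ^ k) x z = (Matrix.of A' * M ^ k) x z := by
    intro k x z A A' hx
    rw [Matrix.mul_apply, Matrix.mul_apply]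
    simp only [Matrix.of_apply]
    exact Finset.sum_congr rfl fun y _ => by rw [hx y]
  have hYFdep : ∀ j (x z : V) (A A' : V → V → ℝ), (∀ v, A x v = A' x v) →
      (∀ v, A z v = A' z v) → YFm M j x z A = YFm M j x z A' := by
    intro j x z A A' hx hz
    unfold YFm
    exact Finset.sum_congr rfl fun p _ => by
      rw [hAMdep p.1 x z A A' hx, hAMdep p.2 z x A A' hz]
  -- cross terms vanish
  have crossZero : ∀ i j (v w v' w' : V), v ≠ w → w ≠ v' → w ≠ w' →
      (∫ ω, Y i v w ω * Y j v' w' ω ∂μ) = 0 := by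
    intro i j v w v' w' hvw hwv' hww'
    have hexp : ∀ ω, Y i v w ω * Y j v' w' ω =
        ∑ p ∈ (Finset.range i ×ˢ Finset.range i).filter (fun p => p.1 + p.2 + 2 = i),
          ∑ y : V, B ω w y * ((M ^ p.2) y v *
            ((B ω * M ^ p.1) v w * YFm M j v' w' (B ω))) := by
      intro ω
      rw [← hYFeq j v' w' ω, hY i v w ω, Finset.sum_mul]
      refine Finset.sum_congr rfl fun p _ => ?_
      rw [show (B ω * M ^ p.2) w v = ∑ y, B ω w y * (M ^ p.2) y v from Matrix.mul_apply,
        Finset.mul_sum, Finset.sum_mul]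
      exact Finset.sum_congr rfl fun y _ => by ring
    rw [integral_congr_ae (Filter.Eventually.of_forall hexp)]
    have hFint : ∀ (p : ℕ × ℕ) (y : V), Integrable
        (fun ω => B ω w y * ((M ^ p.2) y v *
          ((B ω * M ^ p.1) v w * YFm M j v' w' (B ω)))) μ := by
      intro p y
      refine intBdd _ (c₁ * (1 * ((nV * c₁) * ((j:ℝ)^2 * (nV * c₁)^2))))
        ((hBmeas w y).mul ((((hmeasBM p.1 v w).mul
          ((hmeasYF j v' w').comp hBm))).const_mul _)) ?_
      filter_upwards [hBbound] with ω h
      rw [abs_mul, abs_mul, abs_mul]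
      refine mul_le_mul (hBabs1 ω h w y) ?_ (by positivity) hc₁.le
      refine mul_le_mul ?_ (mul_le_mul (hBMbdd ω h p.1 v w) ?_
        (abs_nonneg _) (by positivity)) (by positivity) zero_le_one
      · rw [abs_of_nonneg (hMk0 p.2 y v)]; exact hMk1 p.2 y v
      · rw [← hYFeq j v' w' ω]; exact hYbdd ω h j v' w'
    rw [integral_finset_sum _ (fun p _ => integrable_finset_sum _ (fun y _ => hFint p y))]
    refine Finset.sum_eq_zero fun p _ => ?_
    rw [integral_finset_sum _ (fun y _ => hFint p y)]
    refine Finset.sum_eq_zero fun y _ => ?_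
    refine key w y {v, v', w'}
      (by simp only [Finset.mem_insert, Finset.mem_singleton]; push_neg;
          exact ⟨Ne.symm hvw, hwv', hww'⟩)
      (fun A => (M ^ p.2) y v * ((Matrix.of A * M ^ p.1) v w * YFm M j v' w' A)) ?_ ?_ ?_
    · exact ((hmeasAM p.1 v w).mul (hmeasYF j v' w')).const_mul _
    · intro A A' hAA
      have hv : ∀ x, A v x = A' v x := fun x => hAA v (by simp) x
      have hv' : ∀ x, A v' x = A' v' x := fun x => hAA v' (by simp) x
      have hw'2 : ∀ x, A w' x = A' w' x := fun x => hAA w' (by simp) x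
      show (M ^ p.2) y v * ((Matrix.of A * M ^ p.1) v w * YFm M j v' w' A) =
        (M ^ p.2) y v * ((Matrix.of A' * M ^ p.1) v w * YFm M j v' w' A')
      rw [hAMdep p.1 v w A A' hv, hYFdep j v' w' A A' hv' hw'2]
    · refine intBdd _ (1 * ((nV * c₁) * ((j:ℝ)^2 * (nV * c₁)^2)))
        ((((hmeasAM p.1 v w).mul (hmeasYF j v' w')).const_mul _).comp hBm) ?_
      filter_upwards [hBbound] with ω h
      rw [abs_mul, abs_mul]
      refine mul_le_mul ?_ (mul_le_mul (hBMbdd ω h p.1 v w) ?_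
        (abs_nonneg _) (by positivity)) (by positivity) zero_le_one
      · rw [abs_of_nonneg (hMk0 p.2 y v)]; exact hMk1 p.2 y v
      · rw [← hYFeq j v' w' ω]; exact hYbdd ω h j v' w'
  -- vertex-transitivity transport
  have hαw : ∀ i j (w : V),
      (∫ ω, ∑ v ∈ Finset.univ.erase w, Y i w v ω * Y j w v ω ∂μ) = α i j := by
    intro i j w
    obtain ⟨e, he, heo⟩ := htrans o w
    set F : (V → V → ℝ) → ℝ := fun A => ∑ v ∈ Finset.univ.erase o,
      YFm M i o v A * YFm M j o v A with hFdef
    have hFmeas : Measurable F :=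
      Finset.measurable_sum _ fun v _ => (hmeasYF i o v).mul (hmeasYF j o v)
    have hTe_meas : Measurable (fun ω => fun u v : V => B ω (e u) (e v)) :=
      measurable_pi_lambda _ fun u => measurable_pi_lambda _ fun v => hBmeas (e u) (e v)
    have hYFt : ∀ (ω : Ω) m (v : V),
        YFm M m o v (fun u v' => B ω (e u) (e v')) = Y m w (e v) ω := by
      intro ω m v
      rw [hYFeq m w (e v) ω, ← heo]
      unfold YFm
      refine Finset.sum_congr rfl fun p _ => ?_
      refine congrArg₂ (· * ·) ?_ ?_
      · rw [Matrix.mul_apply, Matrix.mul_apply]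
        simp only [Matrix.of_apply]
        refine Fintype.sum_equiv e _ _ fun x => ?_
        show B ω (e o) (e x) * (M ^ p.1) x v = B ω (e o) (e x) * (M ^ p.1) (e x) (e v)
        rw [hMe e he p.1 x v]
      · rw [Matrix.mul_apply, Matrix.mul_apply]
        simp only [Matrix.of_apply]
        refine Fintype.sum_equiv e _ _ fun x => ?_
        show B ω (e v) (e x) * (M ^ p.2) x o = B ω (e v) (e x) * (M ^ p.2) (e x) (e o)
        rw [hMe e he p.2 x o]
    have h1 : ∀ ω, F (fun u v => B ω (e u) (e v)) =
        ∑ v ∈ Finset.univ.erase w, Y i w v ω * Y j w v ω := by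
      intro ω
      calc F (fun u v => B ω (e u) (e v))
          = ∑ v ∈ Finset.univ.erase o, Y i w (e v) ω * Y j w (e v) ω :=
            Finset.sum_congr rfl fun v _ => by rw [← hYFt ω i v, ← hYFt ω j v]
        _ = ∑ v ∈ Finset.univ.erase w, Y i w v ω * Y j w v ω := by
            refine Finset.sum_equiv e ?_ ?_
            · intro x
              simp only [Finset.mem_erase, Finset.mem_univ, and_true]
              rw [← heo]
              exact (e.injective.ne_iff).symm
            · intro x _; rfl
    have h2 : (∫ ω, F (fun u v => B ω (e u) (e v)) ∂μ) = ∫ ω, F (fun u v => B ω u v) ∂μ := by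
      rw [← integral_map hTe_meas.aemeasurable hFmeas.aestronglyMeasurable,
        ← integral_map hBm.aemeasurable hFmeas.aestronglyMeasurable, hinv e he]
    calc (∫ ω, ∑ v ∈ Finset.univ.erase w, Y i w v ω * Y j w v ω ∂μ)
        = ∫ ω, F (fun u v => B ω (e u) (e v)) ∂μ :=
          integral_congr_ae (Filter.Eventually.of_forall fun ω => (h1 ω).symm)
      _ = ∫ ω, F (fun u v => B ω u v) ∂μ := h2
      _ = α i j := by
          rw [hα i j]
          refine integral_congr_ae (Filter.Eventually.of_forall fun ω => ?_)
          show ∑ v ∈ Finset.univ.erase o, YFm M i o v (B ω) * YFm M j o v (B ω) = _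
          exact Finset.sum_congr rfl fun v _ => by rw [← hYFeq i o v ω, ← hYFeq j o v ω]
  -- the trace sums
  set Sf : ℕ → Ω → ℝ := fun j ω =>
    ∑ p ∈ (Finset.range j ×ˢ Finset.range j).filter (fun p => p.1 + p.2 + 2 = j),
      (B ω * M ^ p.1 * B ω * M ^ p.2).trace with hSfdef
  have hSY : ∀ j (ω : Ω), Sf j ω = ∑ q : V × V, Y j q.1 q.2 ω := by
    intro j ω
    calc Sf j ω
        = ∑ p ∈ (Finset.range j ×ˢ Finset.range j).filter (fun p => p.1 + p.2 + 2 = j),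
            ∑ q : V × V, (B ω * M ^ p.1) q.1 q.2 * (B ω * M ^ p.2) q.2 q.1 := by
          refine Finset.sum_congr rfl fun p _ => ?_
          rw [mul_assoc (B ω * M ^ p.1) (B ω) (M ^ p.2)]
          simp [Matrix.trace, Matrix.diag, Matrix.mul_apply, Fintype.sum_prod_type]
      _ = ∑ q : V × V, Y j q.1 q.2 ω := by
          rw [Finset.sum_comm]
          exact Finset.sum_congr rfl fun q _ => (hY j q.1 q.2 ω).symm
  have hmeasSf : ∀ j, Measurable (Sf j) := by
    intro j
    rw [show Sf j = fun ω => ∑ q : V × V, Y j q.1 q.2 ω from funext fun ω => hSY j ω]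
    exact Finset.measurable_sum _ fun q _ => hmeasY j q.1 q.2
  have hSfbdd : ∀ (ω : Ω), (∀ u v, |B ω u v| ≤ c₁ * M u v) →
      ∀ j, |Sf j ω| ≤ nV^2 * ((j:ℝ)^2 * (nV * c₁)^2) := by
    intro ω h j
    rw [hSY j ω]
    calc |∑ q : V × V, Y j q.1 q.2 ω| ≤ ∑ q : V × V, |Y j q.1 q.2 ω| :=
          Finset.abs_sum_le_sum_abs _ _
      _ ≤ ∑ _q : V × V, (j:ℝ)^2 * (nV * c₁)^2 :=
          Finset.sum_le_sum fun q _ => hYbdd ω h j q.1 q.2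
      _ = nV^2 * ((j:ℝ)^2 * (nV * c₁)^2) := by
          rw [Finset.sum_const, Finset.card_univ, nsmul_eq_mul, Fintype.card_prod]
          push_cast [hnV]; ring
  have intSf : ∀ i j, Integrable (fun ω => Sf i ω * Sf j ω) μ := by
    intro i j
    refine intBdd _ ((nV^2 * ((i:ℝ)^2 * (nV * c₁)^2)) * (nV^2 * ((j:ℝ)^2 * (nV * c₁)^2)))
      ((hmeasSf i).mul (hmeasSf j)) ?_
    filter_upwards [hBbound] with ω h
    rw [abs_mul]
    exact mul_le_mul (hSfbdd ω h i) (hSfbdd ω h j) (abs_nonneg _) (by positivity)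
  have hS0 : ∀ j, (∫ ω, Sf j ω ∂μ) = 0 := by
    intro j
    rw [integral_congr_ae (Filter.Eventually.of_forall (hSY j)),
      integral_finset_sum _ fun q _ => intY j q.1 q.2]
    exact Finset.sum_eq_zero fun q _ => meanY j q.1 q.2
  -- the main covariance computation
  have hSS : ∀ i j, (∫ ω, Sf i ω * Sf j ω ∂μ) = 2 * nV * α i j := by
    intro i j
    have hexpand : ∀ ω, Sf i ω * Sf j ω =
        ∑ q : (V × V) × (V × V), Y i q.1.1 q.1.2 ω * Y j q.2.1 q.2.2 ω := by
      intro ω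
      rw [hSY i ω, hSY j ω, Finset.sum_mul_sum]
      exact (Fintype.sum_prod_type (fun q : (V × V) × (V × V) => Y i q.1.1 q.1.2 ω * Y j q.2.1 q.2.2 ω)).symm
    have inner : ∀ v w : V, v ≠ w →
        (∑ p' : V × V, ∫ ω, Y i v w ω * Y j p'.1 p'.2 ω ∂μ) =
          2 * ∫ ω, Y i v w ω * Y j v w ω ∂μ := by
      intro v w hvw
      have hz : ∀ p' ∈ (Finset.univ : Finset (V × V)),
          p' ∉ ({((v,w) : V × V), (w,v)} : Finset (V × V)) →
          (∫ ω, Y i v w ω * Y j p'.1 p'.2 ω ∂μ) = 0 := by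
        rintro ⟨v', w'⟩ - hp'
        simp only [Finset.mem_insert, Finset.mem_singleton] at hp'
        push_neg at hp'
        obtain ⟨hp1, hp2⟩ := hp'
        by_cases hd : v' = w'
        · rw [integral_congr_ae (Filter.Eventually.of_forall fun ω => ?_), integral_zero]
          show Y i v w ω * Y j v' w' ω = 0
          rw [← hd, hYdiag j v' ω, mul_zero]
        · by_cases hw1 : w = v'
          · have hv1 : v ≠ v' := fun h => hvw (h.trans hw1.symm)
            have hv2 : v ≠ w' := fun h => hp2 (by rw [← hw1, ← h])
            rw [integral_congr_ae (Filter.Eventually.of_forall fun ω =>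
              show Y i v w ω * Y j v' w' ω = Y i w v ω * Y j v' w' ω by
                rw [hYsymm i v w ω])]
            exact crossZero i j w v v' w' (Ne.symm hvw) hv1 hv2
          · by_cases hw2 : w = w'
            · have hv1 : v ≠ v' := fun h => hp1 (by rw [← h, ← hw2])
              have hv2 : v ≠ w' := fun h => hvw (h.trans hw2.symm)
              rw [integral_congr_ae (Filter.Eventually.of_forall fun ω =>
                show Y i v w ω * Y j v' w' ω = Y i w v ω * Y j v' w' ω by
                  rw [hYsymm i v w ω])]
              exact crossZero i j w v v' w' (Ne.symm hvw) hv1 hv2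
            · exact crossZero i j v w v' w' hvw hw1 hw2
      rw [← Finset.sum_subset (Finset.subset_univ _) hz,
        Finset.sum_pair (by simp only [ne_eq, Prod.mk.injEq, not_and]; exact fun h _ => hvw h)]
      have hsw : (∫ ω, Y i v w ω * Y j w v ω ∂μ) = ∫ ω, Y i v w ω * Y j v w ω ∂μ :=
        integral_congr_ae (Filter.Eventually.of_forall fun ω =>
          show Y i v w ω * Y j w v ω = Y i v w ω * Y j v w ω by rw [hYsymm j w v ω])
      rw [hsw]; ring
    calc (∫ ω, Sf i ω * Sf j ω ∂μ)
        = ∑ q : (V × V) × (V × V), ∫ ω, Y i q.1.1 q.1.2 ω * Y j q.2.1 q.2.2 ω ∂μ := by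
          rw [integral_congr_ae (Filter.Eventually.of_forall hexpand)]
          exact integral_finset_sum _ fun q _ => intYY i j _ _ _ _
      _ = ∑ p : V × V, ∑ p' : V × V, ∫ ω, Y i p.1 p.2 ω * Y j p'.1 p'.2 ω ∂μ :=
          Fintype.sum_prod_type _
      _ = ∑ p : V × V, (if p.1 = p.2 then 0
            else 2 * ∫ ω, Y i p.1 p.2 ω * Y j p.1 p.2 ω ∂μ) := by
          refine Finset.sum_congr rfl fun p _ => ?_
          by_cases hd : p.1 = p.2
          · rw [if_pos hd]
            refine Finset.sum_eq_zero fun p' _ => ?_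
            rw [integral_congr_ae (Filter.Eventually.of_forall fun ω =>
              show Y i p.1 p.2 ω * Y j p'.1 p'.2 ω = 0 by
                rw [← hd, hYdiag i p.1 ω, zero_mul]), integral_zero]
          · rw [if_neg hd]; exact inner p.1 p.2 hd
      _ = ∑ v : V, ∑ w : V, (if v = w then 0
            else 2 * ∫ ω, Y i v w ω * Y j v w ω ∂μ) := Fintype.sum_prod_type _
      _ = ∑ v : V, 2 * (∫ ω, ∑ w ∈ Finset.univ.erase v, Y i v w ω * Y j v w ω ∂μ) := by
          refine Finset.sum_congr rfl fun v _ => ?_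
          rw [← Finset.add_sum_erase _ _ (Finset.mem_univ v), if_pos rfl, zero_add,
            integral_finset_sum _ fun w _ => intYY i j _ _ _ _, Finset.mul_sum]
          refine Finset.sum_congr rfl fun w hw => ?_
          rw [if_neg (fun h => (Finset.mem_erase.mp hw).1 h.symm)]
      _ = ∑ _v : V, 2 * α i j :=
          Finset.sum_congr rfl fun v _ => by rw [hαw i j v]
      _ = 2 * nV * α i j := by
          rw [Finset.sum_const, Finset.card_univ, nsmul_eq_mul]; ring
  -- summability of coefficients against polynomials
  have hsum3 : ∀ (c : ℕ → ℂ) (r : ℝ), 1 < r → (Summable fun k => ‖c k‖ * r ^ k) →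
      Summable (fun k => ‖c k‖ * (k:ℝ)^3) := by
    intro c r hr hsum
    have hr0 : 0 < r := lt_trans one_pos hr
    have h1 : Summable (fun k : ℕ => (k:ℝ)^3 * (1/r)^k) := by
      apply summable_pow_mul_geometric_of_norm_lt_one
      rw [Real.norm_eq_abs, abs_of_pos (by positivity), div_lt_one hr0]
      exact hr
    have hTb : ∀ k : ℕ, (k:ℝ)^3 * (1/r)^k ≤ ∑' m : ℕ, (m:ℝ)^3 * (1/r)^m :=
      fun k => Summable.le_tsum h1 k (fun m _ => by positivity)
    refine Summable.of_nonneg_of_le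
      (fun k => mul_nonneg (norm_nonneg _) (by positivity)) (fun k => ?_)
      (hsum.mul_left (∑' m : ℕ, (m:ℝ)^3 * (1/r)^m))
    have heq : ‖c k‖ * (k:ℝ)^3 =
        (‖c k‖ * r^k) * ((k:ℝ)^3 * (1/r)^k) := by
      have : (1/r)^k = (r^k)⁻¹ := by rw [one_div, inv_pow]
      rw [this]
      field_simp
    rw [heq]
    calc (‖c k‖ * r^k) * ((k:ℝ)^3 * (1/r)^k)
        ≤ (‖c k‖ * r^k) * (∑' m : ℕ, (m:ℝ)^3 * (1/r)^m) :=
          mul_le_mul_of_nonneg_left (hTb k)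
            (mul_nonneg (norm_nonneg _) (by positivity))
      _ = (∑' m : ℕ, (m:ℝ)^3 * (1/r)^m) * (‖c k‖ * r ^ k) := mul_comm _ _
  obtain ⟨ra, hra, hsa⟩ := hf
  obtain ⟨rb, hrb, hsb⟩ := hg
  have hCasum : Summable (fun j => ‖a j‖ * ((j:ℝ)/2) *
      (nV^2 * ((j:ℝ)^2 * (nV * c₁)^2))) :=
    ((hsum3 a ra hra hsa).mul_right ((nV^2 * (nV * c₁)^2)/2)).congr (fun k => by ring)
  have hCbsum : Summable (fun j => ‖b j‖ * ((j:ℝ)/2) *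
      (nV^2 * ((j:ℝ)^2 * (nV * c₁)^2))) :=
    ((hsum3 b rb hrb hsb).mul_right ((nV^2 * (nV * c₁)^2)/2)).congr (fun k => by ring)
  have hC0 : ∀ (c : ℕ → ℂ) (j : ℕ), 0 ≤ ‖c j‖ * ((j:ℝ)/2) *
      (nV^2 * ((j:ℝ)^2 * (nV * c₁)^2)) :=
    fun c j => mul_nonneg (mul_nonneg (norm_nonneg _) (by positivity)) (by positivity)
  -- norm bound on the summands
  have hnormu : ∀ (c : ℕ → ℂ) (j : ℕ) (ω : Ω), (∀ u v, |B ω u v| ≤ c₁ * M u v) →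
      ‖c j * ((j:ℂ)/2) * ((Sf j ω : ℝ):ℂ)‖ ≤ ‖c j‖ * ((j:ℝ)/2) *
        (nV^2 * ((j:ℝ)^2 * (nV * c₁)^2)) := by
    intro c j ω h
    rw [norm_mul, norm_mul]
    have h1 : ‖((j:ℂ)/2)‖ = (j:ℝ)/2 := by
      rw [norm_div, Complex.norm_natCast]; norm_num
    rw [h1, Complex.norm_real, Real.norm_eq_abs]
    exact mul_le_mul_of_nonneg_left (hSfbdd ω h j)
      (mul_nonneg (norm_nonneg _) (by positivity))
  have intu : ∀ (c : ℕ → ℂ) (j : ℕ),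
      Integrable (fun ω => c j * ((j:ℂ)/2) * ((Sf j ω : ℝ):ℂ)) μ := by
    intro c j
    refine Integrable.mono' (integrable_const (‖c j‖ * ((j:ℝ)/2) *
        (nV^2 * ((j:ℝ)^2 * (nV * c₁)^2))))
      ((Complex.measurable_ofReal.comp (hmeasSf j)).const_mul _).aestronglyMeasurable ?_
    filter_upwards [hBbound] with ω h
    exact hnormu c j ω h
  have hintnorm : ∀ (c : ℕ → ℂ) (j : ℕ), (∫ ω, ‖c j * ((j:ℂ)/2) * ((Sf j ω : ℝ):ℂ)‖ ∂μ) ≤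
      ‖c j‖ * ((j:ℝ)/2) * (nV^2 * ((j:ℝ)^2 * (nV * c₁)^2)) := by
    intro c j
    calc (∫ ω, ‖c j * ((j:ℂ)/2) * ((Sf j ω : ℝ):ℂ)‖ ∂μ)
        ≤ ∫ _ω, ‖c j‖ * ((j:ℝ)/2) * (nV^2 * ((j:ℝ)^2 * (nV * c₁)^2)) ∂μ := by
          refine integral_mono_ae (intu c j).norm (integrable_const _) ?_
          filter_upwards [hBbound] with ω h
          exact hnormu c j ω h
      _ = ‖c j‖ * ((j:ℝ)/2) * (nV^2 * ((j:ℝ)^2 * (nV * c₁)^2)) := by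
          rw [integral_const]; simp
  have hIu : ∀ j, (∫ ω, a j * ((j:ℂ)/2) * ((Sf j ω : ℝ):ℂ) ∂μ) = 0 := by
    intro j
    rw [integral_const_mul]
    have hcast : (∫ ω, ((Sf j ω : ℝ):ℂ) ∂μ) = ((∫ ω, Sf j ω ∂μ : ℝ) : ℂ) := integral_ofReal
    rw [hcast, hS0 j]
    simp
  have hTf2 : ∀ ω, Tf ω = (((Real.sqrt (Fintype.card V))⁻¹ : ℝ) : ℂ) *
      ∑' j : ℕ, a j * ((j:ℂ)/2) * ((Sf j ω : ℝ):ℂ) := hTf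
  have hTg2 : ∀ ω, Tg ω = (((Real.sqrt (Fintype.card V))⁻¹ : ℝ) : ℂ) *
      ∑' j : ℕ, b j * ((j:ℂ)/2) * ((Sf j ω : ℝ):ℂ) := hTg
  constructor
  · -- mean of Tf is zero
    rw [integral_congr_ae (Filter.Eventually.of_forall hTf2), integral_const_mul,
      ← integral_tsum_of_summable_integral_norm (fun j => intu a j)
        (Summable.of_nonneg_of_le
          (fun j => integral_nonneg (fun ω => norm_nonneg _))
          (fun j => hintnorm a j) hCasum)]
    rw [tsum_congr hIu, tsum_zero, mul_zero]
  · -- covariance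
    have hsummableu : ∀ (c : ℕ → ℂ), (Summable (fun j => ‖c j‖ * ((j:ℝ)/2) *
        (nV^2 * ((j:ℝ)^2 * (nV * c₁)^2)))) → ∀ (ω : Ω), (∀ u v, |B ω u v| ≤ c₁ * M u v) →
        Summable fun j => ‖c j * ((j:ℂ)/2) * ((Sf j ω : ℝ):ℂ)‖ :=
      fun c hs ω h => Summable.of_nonneg_of_le (fun j => norm_nonneg _)
        (fun j => hnormu c j ω h) hs
    have hprod : ∀ᵐ ω ∂μ, Tf ω * Tg ω = (((Real.sqrt (Fintype.card V))⁻¹ : ℝ) : ℂ)^2 *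
        ∑' (q : ℕ × ℕ), (a q.1 * ((q.1:ℂ)/2) * ((Sf q.1 ω : ℝ):ℂ)) *
          (b q.2 * ((q.2:ℂ)/2) * ((Sf q.2 ω : ℝ):ℂ)) := by
      filter_upwards [hBbound] with ω h
      rw [hTf2 ω, hTg2 ω, mul_mul_mul_comm, ← sq,
        tsum_mul_tsum_of_summable_norm (hsummableu a hCasum ω h) (hsummableu b hCbsum ω h)]
    have intuv : ∀ q : ℕ × ℕ, Integrable (fun ω =>
        (a q.1 * ((q.1:ℂ)/2) * ((Sf q.1 ω : ℝ):ℂ)) *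
          (b q.2 * ((q.2:ℂ)/2) * ((Sf q.2 ω : ℝ):ℂ))) μ := by
      intro q
      refine Integrable.mono' (integrable_const
        ((‖a q.1‖ * ((q.1:ℝ)/2) * (nV^2 * ((q.1:ℝ)^2 * (nV * c₁)^2))) *
         (‖b q.2‖ * ((q.2:ℝ)/2) * (nV^2 * ((q.2:ℝ)^2 * (nV * c₁)^2)))))
        (((Complex.measurable_ofReal.comp (hmeasSf q.1)).const_mul _).mul
         ((Complex.measurable_ofReal.comp (hmeasSf q.2)).const_mul _)).aestronglyMeasurable ?_
      filter_upwards [hBbound] with ω h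
      rw [norm_mul]
      exact mul_le_mul (hnormu a q.1 ω h) (hnormu b q.2 ω h) (norm_nonneg _) (hC0 a q.1)
    have hintnorm2 : Summable (fun q : ℕ × ℕ => ∫ ω,
        ‖(a q.1 * ((q.1:ℂ)/2) * ((Sf q.1 ω : ℝ):ℂ)) *
          (b q.2 * ((q.2:ℂ)/2) * ((Sf q.2 ω : ℝ):ℂ))‖ ∂μ) := by
      refine Summable.of_nonneg_of_le
        (fun q => integral_nonneg (fun ω => norm_nonneg _)) (fun q => ?_)
        (hCasum.mul_of_nonneg hCbsum (fun j => hC0 a j) (fun j => hC0 b j))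
      calc (∫ ω, ‖(a q.1 * ((q.1:ℂ)/2) * ((Sf q.1 ω : ℝ):ℂ)) *
              (b q.2 * ((q.2:ℂ)/2) * ((Sf q.2 ω : ℝ):ℂ))‖ ∂μ)
          ≤ ∫ _ω, (‖a q.1‖ * ((q.1:ℝ)/2) * (nV^2 * ((q.1:ℝ)^2 * (nV * c₁)^2))) *
              (‖b q.2‖ * ((q.2:ℝ)/2) * (nV^2 * ((q.2:ℝ)^2 * (nV * c₁)^2))) ∂μ := by
            refine integral_mono_ae (intuv q).norm (integrable_const _) ?_
            filter_upwards [hBbound] with ω h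
            rw [norm_mul]
            exact mul_le_mul (hnormu a q.1 ω h) (hnormu b q.2 ω h) (norm_nonneg _) (hC0 a q.1)
        _ = _ := by rw [integral_const]; simp
    have hIuv : ∀ q : ℕ × ℕ, (∫ ω, (a q.1 * ((q.1:ℂ)/2) * ((Sf q.1 ω : ℝ):ℂ)) *
        (b q.2 * ((q.2:ℂ)/2) * ((Sf q.2 ω : ℝ):ℂ)) ∂μ) =
        (a q.1 * b q.2 * (q.1:ℂ) * (q.2:ℂ) / 4) * ((2 * nV * α q.1 q.2 : ℝ):ℂ) := by
      intro q
      have hpt : ∀ ω, (a q.1 * ((q.1:ℂ)/2) * ((Sf q.1 ω : ℝ):ℂ)) *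
          (b q.2 * ((q.2:ℂ)/2) * ((Sf q.2 ω : ℝ):ℂ)) =
          (a q.1 * b q.2 * (q.1:ℂ) * (q.2:ℂ) / 4) * ((Sf q.1 ω * Sf q.2 ω : ℝ):ℂ) := by
        intro ω; push_cast; ring
      have hcast : (∫ ω, ((Sf q.1 ω * Sf q.2 ω : ℝ):ℂ) ∂μ) =
          ((∫ ω, Sf q.1 ω * Sf q.2 ω ∂μ : ℝ) : ℂ) := integral_ofReal
      rw [integral_congr_ae (Filter.Eventually.of_forall hpt), integral_const_mul,
        hcast, hSS q.1 q.2]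
    have hnVC : ((nV:ℝ):ℂ) ≠ 0 := Complex.ofReal_ne_zero.mpr hnpos.ne'
    have hc2 : ((((Real.sqrt (Fintype.card V))⁻¹ : ℝ)):ℂ)^2 = (((nV)⁻¹ : ℝ) : ℂ) := by
      rw [← Complex.ofReal_pow]
      congr 1
      rw [inv_pow, Real.sq_sqrt (by positivity : (0:ℝ) ≤ (Fintype.card V : ℝ))]
    rw [integral_congr_ae hprod, integral_const_mul,
      ← integral_tsum_of_summable_integral_norm intuv hintnorm2, tsum_congr hIuv, hc2,
      ← tsum_mul_left, ← tsum_mul_left]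
    refine tsum_congr fun q => ?_
    push_cast
    field_simp
    ring
end

section
/- Fix an integer d \ge 2 and set \rho = 4(d-1)/d^2. For complex \lambda with 0 < |\lambda| < 1, define s = \sqrt{1 - \rho\lambda^2} (principal branch), a_\lambda = d(1 - s)/(2(d-1)\lambda), and b_\lambda = (1 - \lambda a_\lambda)^{-1}; similarly for \mu with t = \sqrt{1-\rho\mu^2}. Then the series 2d \sum_{r=1}^{\infty} (d-1)^{r-1} \big( b_\lambda (1 - a_\lambda^2) a_\lambda^{r-1} \big)^2 \big( b_\mu (1 - a_\mu^2) a_\mu^{r-1} \big)^2 converges absolutely and equals \frac{32 (d-1) d}{(1+s)(1+t)\big( (d-2)(1+s)(1+t) + 2(s+t) \big)}. -/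
open Complex Real

lemma re_cpow_half_pos {z : ℂ} (hz : 0 < z.re) : 0 < (z ^ ((1:ℂ)/2)).re := by
  have hz0 : z ≠ 0 := by intro h; simp [h] at hz
  rw [Complex.cpow_def_of_ne_zero hz0, Complex.exp_re]
  have him : (Complex.log z * ((1:ℂ)/2)).im = z.arg / 2 := by
    simp [Complex.mul_im, Complex.log_im]; ring
  apply mul_pos (Real.exp_pos _)
  rw [him]
  have harg : |z.arg| < π/2 := Complex.abs_arg_lt_pi_div_two_iff.2 (Or.inl hz)
  have := abs_lt.1 harg
  apply Real.cos_pos_of_mem_Ioo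
  constructor <;> [linarith [Real.pi_pos]; linarith [Real.pi_pos]]

lemma sq_cpow_half (z : ℂ) : (z ^ ((1:ℂ)/2)) ^ 2 = z := by
  have : (1:ℂ)/2 = ((2:ℕ):ℂ)⁻¹ := by norm_num
  rw [this, Complex.cpow_nat_inv_pow _ (by norm_num : (2:ℕ) ≠ 0)]

set_option maxHeartbeats 1000000 in
/-- Summation of the Green-function series on the `d`-regular tree:
`2d ∑_{r≥1} (d-1)^{r-1} (b_λ(1-a_λ²)a_λ^{r-1})² (b_μ(1-a_μ²)a_μ^{r-1})²
 = 32(d-1)d / ((1+s)(1+t)((d-2)(1+s)(1+t)+2(s+t)))`,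
with `s = √(1-ρλ²)`, `t = √(1-ρμ²)` (principal branch) and the series converging
absolutely.  Below, the index `r : ℕ` plays the role of `r - 1`. -/
theorem tree_green_series_sum
    (d : ℕ) (hd : 2 ≤ d)
    (ρ : ℝ) (hρ : ρ = 4 * ((d : ℝ) - 1) / (d : ℝ) ^ 2)
    (lam mu : ℂ) (hlam0 : lam ≠ 0) (hlam : ‖lam‖ < 1)
    (hmu0 : mu ≠ 0) (hmu : ‖mu‖ < 1)
    (s t : ℂ)
    (hs : s = ((1 : ℂ) - (ρ : ℂ) * lam ^ 2) ^ ((1 : ℂ) / 2))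
    (ht : t = ((1 : ℂ) - (ρ : ℂ) * mu ^ 2) ^ ((1 : ℂ) / 2))
    (alam amu blam bmu : ℂ)
    (halam : alam = (d : ℂ) * (1 - s) / (2 * ((d : ℂ) - 1) * lam))
    (hamu : amu = (d : ℂ) * (1 - t) / (2 * ((d : ℂ) - 1) * mu))
    (hblam : blam = (1 - lam * alam)⁻¹)
    (hbmu : bmu = (1 - mu * amu)⁻¹) :
    Summable (fun r : ℕ =>
      ‖(2 * (d : ℂ) * ((d : ℂ) - 1) ^ r *
        (blam * (1 - alam ^ 2) * alam ^ r) ^ 2 *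
        (bmu * (1 - amu ^ 2) * amu ^ r) ^ 2)‖) ∧
    (∑' r : ℕ, 2 * (d : ℂ) * ((d : ℂ) - 1) ^ r *
        (blam * (1 - alam ^ 2) * alam ^ r) ^ 2 *
        (bmu * (1 - amu ^ 2) * amu ^ r) ^ 2) =
      32 * ((d : ℂ) - 1) * (d : ℂ) /
        ((1 + s) * (1 + t) * (((d : ℂ) - 2) * (1 + s) * (1 + t) + 2 * (s + t))) := by
  -- basic facts about d and ρ
  have hdR : (2:ℝ) ≤ (d:ℝ) := by exact_mod_cast hd
  have hρpos : 0 < ρ := by rw [hρ]; apply div_pos (by nlinarith) (by nlinarith)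
  have hρle : ρ ≤ 1 := by rw [hρ]; rw [div_le_one (by positivity)]; nlinarith
  have hd0 : (d:ℂ) ≠ 0 := by
    simp only [Ne, Nat.cast_eq_zero]; omega
  have hd1 : (d:ℂ) - 1 ≠ 0 := by
    intro h
    have h2 : ((d:ℂ) - 1).re = 0 := by rw [h]; simp
    simp [Complex.sub_re] at h2
    linarith
  -- positivity of real parts of 1 - ρλ², 1 - ρμ²
  have hzre : ∀ w : ℂ, ‖w‖ < 1 → 0 < ((1:ℂ) - (ρ:ℂ) * w ^ 2).re := by
    intro w hw
    have h1 : (w^2).re ≤ ‖w^2‖ := Complex.re_le_norm _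
    have h2 : ‖w^2‖ = ‖w‖^2 := by simp
    have h3 : ((1:ℂ) - (ρ:ℂ) * w ^ 2).re = 1 - ρ * (w^2).re := by
      simp [Complex.sub_re, Complex.mul_re]
    rw [h3]
    nlinarith [norm_nonneg w, norm_nonneg (w^2)]
  have hsre : 0 < s.re := by rw [hs]; exact re_cpow_half_pos (hzre lam hlam)
  have htre : 0 < t.re := by rw [ht]; exact re_cpow_half_pos (hzre mu hmu)
  have hs2 : s ^ 2 = 1 - (ρ:ℂ) * lam ^ 2 := by rw [hs]; exact sq_cpow_half _
  have ht2 : t ^ 2 = 1 - (ρ:ℂ) * mu ^ 2 := by rw [ht]; exact sq_cpow_half _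
  have hs2re : 0 < (s^2).re := by rw [hs2]; exact hzre lam hlam
  have ht2re : 0 < (t^2).re := by rw [ht2]; exact hzre mu hmu
  have hsim : s.im^2 < s.re^2 := by
    have : (s^2).re = s.re^2 - s.im^2 := by simp [pow_two, Complex.mul_re]
    nlinarith
  have htim : t.im^2 < t.re^2 := by
    have : (t^2).re = t.re^2 - t.im^2 := by simp [pow_two, Complex.mul_re]
    nlinarith
  have h1s : (1:ℂ) + s ≠ 0 := by
    intro h
    have h2 : ((1:ℂ) + s).re = 0 := by rw [h]; simp
    simp [Complex.add_re] at h2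
    linarith
  have h1t : (1:ℂ) + t ≠ 0 := by
    intro h
    have h2 : ((1:ℂ) + t).re = 0 := by rw [h]; simp
    simp [Complex.add_re] at h2
    linarith
  -- ρ d² = 4(d-1)
  have hρd : (ρ:ℂ) * (d:ℂ)^2 = 4 * ((d:ℂ) - 1) := by
    have h : ρ * (d:ℝ)^2 = 4*((d:ℝ)-1) := by rw [hρ]; field_simp
    have := congrArg (Complex.ofReal) h
    push_cast at this ⊢
    convert this using 2 <;> push_cast <;> ring
  -- key polynomial identities
  have hkey : 4*((d:ℂ)-1)*lam^2 = (d:ℂ)^2*(1 - s^2) := by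
    linear_combination (d:ℂ)^2 * hs2 - lam^2 * hρd
  have hkeyt : 4*((d:ℂ)-1)*mu^2 = (d:ℂ)^2*(1 - t^2) := by
    linear_combination (d:ℂ)^2 * ht2 - mu^2 * hρd
  -- a = 2λ/(d(1+s))
  have ha : alam = 2*lam/((d:ℂ)*(1+s)) := by
    rw [halam]
    rw [div_eq_div_iff (by simp [hd1, hlam0]) (by simp [hd0, h1s])]
    linear_combination -hkey
  have hat : amu = 2*mu/((d:ℂ)*(1+t)) := by
    rw [hamu]
    rw [div_eq_div_iff (by simp [hd1, hmu0]) (by simp [hd0, h1t])]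
    linear_combination -hkeyt
  -- 1 - λa = (d-2+ds)/(2(d-1))
  have hds : ((d:ℂ) - 2) + (d:ℂ)*s ≠ 0 := by
    intro h
    have h2 : (((d:ℂ) - 2) + (d:ℂ)*s).re = ((d:ℝ) - 2) + (d:ℝ)*s.re := by
      simp [Complex.add_re, Complex.sub_re, Complex.mul_re]
    rw [h] at h2
    simp at h2
    nlinarith
  have hdt : ((d:ℂ) - 2) + (d:ℂ)*t ≠ 0 := by
    intro h
    have h2 : (((d:ℂ) - 2) + (d:ℂ)*t).re = ((d:ℝ) - 2) + (d:ℝ)*t.re := by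
      simp [Complex.add_re, Complex.sub_re, Complex.mul_re]
    rw [h] at h2
    simp at h2
    nlinarith
  have h1la : 1 - lam*alam = (((d:ℂ)-2) + (d:ℂ)*s)/(2*((d:ℂ)-1)) := by
    rw [ha]
    field_simp
    linear_combination -hkey
  have h1ma : 1 - mu*amu = (((d:ℂ)-2) + (d:ℂ)*t)/(2*((d:ℂ)-1)) := by
    rw [hat]
    field_simp
    linear_combination -hkeyt
  have hblam2 : blam = 2*((d:ℂ)-1)/(((d:ℂ)-2) + (d:ℂ)*s) := by
    rw [hblam, h1la]; rw [inv_div]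
  have hbmu2 : bmu = 2*((d:ℂ)-1)/(((d:ℂ)-2) + (d:ℂ)*t) := by
    rw [hbmu, h1ma]; rw [inv_div]
  -- B_λ := b(1-a²) = 2/(1+s)
  have hBs : blam * (1 - alam^2) = 2/(1+s) := by
    rw [hblam2, ha]
    field_simp
    linear_combination -hkey
  have hBt : bmu * (1 - amu^2) = 2/(1+t) := by
    rw [hbmu2, hat]
    field_simp
    linear_combination -hkeyt
  -- the geometric ratio
  set q : ℂ := (1-s)*(1-t)/(((d:ℂ)-1)*(1+s)*(1+t)) with hqdef
  have hq : ((d:ℂ)-1)*(alam^2*amu^2) = q := by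
    rw [ha, hat, hqdef]
    have hprod : 16*((d:ℂ)-1)^2*(lam^2*mu^2) = (d:ℂ)^4*((1-s^2)*(1-t^2)) := by
      linear_combination (4*((d:ℂ)-1)*mu^2) * hkey + ((d:ℂ)^2*(1-s^2)) * hkeyt
    field_simp
    linear_combination hprod
  -- norm comparisons
  have habs_s : ‖1-s‖ < ‖1+s‖ := by
    have h1 : Complex.normSq (1-s) < Complex.normSq (1+s) := by
      simp only [Complex.normSq_apply, Complex.sub_re, Complex.add_re, Complex.sub_im,
        Complex.add_im, Complex.one_re, Complex.one_im]
      nlinarith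
    have h2 := Real.sqrt_lt_sqrt (Complex.normSq_nonneg _) h1
    simpa [Complex.norm_def] using h2
  have habs_t : ‖1-t‖ < ‖1+t‖ := by
    have h1 : Complex.normSq (1-t) < Complex.normSq (1+t) := by
      simp only [Complex.normSq_apply, Complex.sub_re, Complex.add_re, Complex.sub_im,
        Complex.add_im, Complex.one_re, Complex.one_im]
      nlinarith
    have h2 := Real.sqrt_lt_sqrt (Complex.normSq_nonneg _) h1
    simpa [Complex.norm_def] using h2
  have habsd : ‖(d:ℂ)-1‖ = (d:ℝ)-1 := by
    rw [show ((d:ℂ)-1) = ((((d:ℝ)-1 : ℝ)) : ℂ) by push_cast; ring, Complex.norm_real, Real.norm_eq_abs,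
      _root_.abs_of_nonneg (by linarith)]
  have hpos_s : 0 < ‖1+s‖ := by
    simpa using (norm_pos_iff.2 h1s)
  have hpos_t : 0 < ‖1+t‖ := by
    simpa using (norm_pos_iff.2 h1t)
  have hqlt : ‖q‖ < 1 := by
    rw [hqdef]
    rw [norm_div, norm_mul, norm_mul, norm_mul, habsd]
    rw [div_lt_one (mul_pos (mul_pos (by linarith : (0:ℝ) < (d:ℝ)-1) hpos_s) hpos_t)]
    nlinarith [norm_nonneg (1-s), norm_nonneg (1-t),
      mul_pos hpos_s hpos_t]
  -- rewrite terms as a geometric series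
  set C : ℂ := 2*(d:ℂ)*(2/(1+s))^2*(2/(1+t))^2 with hCdef
  have hterm : ∀ r : ℕ, 2 * (d : ℂ) * ((d : ℂ) - 1) ^ r *
      (blam * (1 - alam ^ 2) * alam ^ r) ^ 2 *
      (bmu * (1 - amu ^ 2) * amu ^ r) ^ 2 = C * q ^ r := by
    intro r
    have expand : 2 * (d : ℂ) * ((d : ℂ) - 1) ^ r *
        (blam * (1 - alam ^ 2) * alam ^ r) ^ 2 *
        (bmu * (1 - amu ^ 2) * amu ^ r) ^ 2
        = 2*(d:ℂ)*(blam*(1-alam^2))^2*(bmu*(1-amu^2))^2*(((d:ℂ)-1)*(alam^2*amu^2))^r := by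
      rw [mul_pow ((d:ℂ)-1) (alam^2*amu^2), mul_pow (alam^2) (amu^2), ← pow_mul, ← pow_mul,
        pow_mul' alam, pow_mul' amu]
      ring
    rw [expand, hBs, hBt, hq, hCdef]
  have hfun : (fun r : ℕ => ‖(2 * (d : ℂ) * ((d : ℂ) - 1) ^ r *
      (blam * (1 - alam ^ 2) * alam ^ r) ^ 2 *
      (bmu * (1 - amu ^ 2) * amu ^ r) ^ 2)‖)
      = fun r : ℕ => ‖C‖ * ‖q‖ ^ r := by
    funext r; rw [hterm r, norm_mul, norm_pow]
  constructor
  · rw [hfun]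
    exact (summable_geometric_of_lt_one (norm_nonneg q) hqlt).mul_left _
  · -- nonvanishing of the final denominator
    have hD : ((d:ℂ)-2)*(1+s)*(1+t) + 2*(s+t) ≠ 0 := by
      intro h
      have h2 : (((d:ℂ)-2)*(1+s)*(1+t) + 2*(s+t)).re
          = ((d:ℝ)-2)*((1+s.re)*(1+t.re) - s.im*t.im) + 2*(s.re+t.re) := by
        simp [Complex.add_re, Complex.sub_re, Complex.mul_re, Complex.mul_im,
          Complex.add_im, Complex.sub_im]
        ring
      rw [h] at h2
      simp at h2
      have hP : s.im*t.im < s.re*t.re := by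
        nlinarith [mul_pos (sub_pos.2 hsim) (sub_pos.2 htim), mul_pos hsre htre,
          sq_nonneg (s.re*t.re + s.im*t.im), sq_nonneg s.im, sq_nonneg t.im]
      have hP2 : (0:ℝ) ≤ (1+s.re)*(1+t.re) - s.im*t.im := by nlinarith
      have hP3 : (0:ℝ) ≤ ((d:ℝ)-2)*((1+s.re)*(1+t.re) - s.im*t.im) :=
        mul_nonneg (by linarith) hP2
      linarith
    have h1mq : (1:ℂ) - q = (((d:ℂ)-2)*(1+s)*(1+t) + 2*(s+t))/(((d:ℂ)-1)*(1+s)*(1+t)) := by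
      rw [hqdef]
      field_simp
      ring
    calc (∑' r : ℕ, 2 * (d : ℂ) * ((d : ℂ) - 1) ^ r *
        (blam * (1 - alam ^ 2) * alam ^ r) ^ 2 *
        (bmu * (1 - amu ^ 2) * amu ^ r) ^ 2)
        = ∑' r : ℕ, C * q ^ r := tsum_congr hterm
      _ = C * (1-q)⁻¹ := by
          rw [tsum_mul_left, tsum_geometric_of_norm_lt_one (by exact hqlt)]
      _ = 32 * ((d : ℂ) - 1) * (d : ℂ) /
        ((1 + s) * (1 + t) * (((d : ℂ) - 2) * (1 + s) * (1 + t) + 2 * (s + t))) := by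
          rw [h1mq, hCdef, inv_div]
          field_simp
          ring
end

section
/- Let d be a real number with d > 2 and let s, t be complex numbers with Re(s) \ge 0 and Re(t) \ge 0. Then (d-2)(1+s)(1+t) + 2(s+t) \ne 0. -/
/-- For real `d > 2` and complex `s, t` with nonnegative real parts,
`(d-2)(1+s)(1+t) + 2(s+t) ≠ 0`. -/
theorem denominator_ne_zero (d : ℝ) (hd : 2 < d) (s t : ℂ)
    (hs : 0 ≤ s.re) (ht : 0 ≤ t.re) :
    ((d : ℂ) - 2) * (1 + s) * (1 + t) + 2 * (s + t) ≠ 0 := by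
  intro h
  -- Key identity: 2(s+t) = (1+s)(1+t) - (1-s)(1-t)
  have key : (1 - s) * (1 - t) = ((d : ℂ) - 1) * ((1 + s) * (1 + t)) := by
    linear_combination -h
  have h1 : ‖1 - s‖ ≤ ‖1 + s‖ := by
    rw [Complex.norm_def, Complex.norm_def]
    apply Real.sqrt_le_sqrt
    simp [Complex.normSq_apply]
    nlinarith [hs]
  have h2 : ‖1 - t‖ ≤ ‖1 + t‖ := by
    rw [Complex.norm_def, Complex.norm_def]
    apply Real.sqrt_le_sqrt
    simp [Complex.normSq_apply]
    nlinarith [ht]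
  have hne1 : (1 + s) ≠ 0 := by
    intro h0
    have := congrArg Complex.re h0
    simp at this
    linarith
  have hne2 : (1 + t) ≠ 0 := by
    intro h0
    have := congrArg Complex.re h0
    simp at this
    linarith
  have hp1 : 0 < ‖1 + s‖ := norm_pos_iff.mpr hne1
  have hp2 : 0 < ‖1 + t‖ := norm_pos_iff.mpr hne2
  have habs := congrArg norm key
  rw [norm_mul, norm_mul, norm_mul] at habs
  have hd1 : ‖(d : ℂ) - 1‖ = d - 1 := by
    rw [show ((d : ℂ) - 1) = ((d - 1 : ℝ) : ℂ) by push_cast; ring,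
      Complex.norm_real, Real.norm_eq_abs, abs_of_pos (by linarith)]
  rw [hd1] at habs
  nlinarith [mul_le_mul h1 h2 (norm_nonneg _) (norm_nonneg _),
    mul_pos hp1 hp2]
end

section
/- For complex u, v \in \mathbb{C} \setminus [0,1] with u \ne v or u = v, set s = \sqrt{1 - 1/u} and t = \sqrt{1 - 1/v} (principal branch). Then \frac{32}{uv\,(1+s)(1+t)(s+t)} = \frac{32}{\pi} \int_0^1 \frac{\sqrt{x(1-x)}}{(x-u)(x-v)}\, dx. -/
open Complex Set Real intervalIntegral

lemma st19_e5 (u s a b d : ℂ) (ha : a ≠ 0) (hb : b ≠ 0) (hd0 : d ≠ 0)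
    (hu0 : u ≠ 0) (hs0 : s ≠ 0) :
    ((1 - 2 * u) / (2 * (Complex.I * u * s))) *
      ((-(Complex.I * s) * 1 / (a * b)) / (d / u))
      = -(1 - 2 * u) / (2 * ((a * b) * d)) := by
  have hI : Complex.I ≠ 0 := Complex.I_ne_zero
  rw [div_div_eq_mul_div, div_mul_div_comm, div_eq_div_iff
    (by simp [mul_ne_zero_iff, hI, hu0, hs0, ha, hb, hd0])
    (by simp [mul_ne_zero_iff, ha, hb, hd0])]
  linear_combination (-2*Complex.I*s*u*d + 4*b*b⁻¹*Complex.I*s*u^2*d) * (mul_inv_cancel₀ ha)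
    + (4*Complex.I*s*u^2*d - 2*a*a⁻¹*Complex.I*s*u*d) * (mul_inv_cancel₀ hb)


lemma st19_alg (u s a b : ℂ) (ha : a ≠ 0) (hb : b ≠ 0)
    (hab : a ^ 2 + b ^ 2 = 1) (hus : u * s ^ 2 = u - 1)
    (hu0 : u ≠ 0) (hs0 : s ≠ 0) (hXu : a ^ 2 - u ≠ 0)
    (hP : s * a + Complex.I * b ≠ 0) (hQ : s * a - Complex.I * b ≠ 0) :
    (b / (2 * a) - a / (2 * b)) + (1 / 2 - u) * (1 / (a * b))
      + ((1 - u) / (Complex.I * s)) *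
        ((s / (2 * a) - Complex.I / (2 * b)) / (s * a + Complex.I * b)
          - (s / (2 * a) + Complex.I / (2 * b)) / (s * a - Complex.I * b))
    = a * b / (a ^ 2 - u) := by
  have hI : Complex.I ≠ 0 := Complex.I_ne_zero
  have huX : u - a ^ 2 ≠ 0 := fun h => hXu (by linear_combination -h)
  have e1 : (s / (2 * a) - Complex.I / (2 * b)) / (s * a + Complex.I * b)
      - (s / (2 * a) + Complex.I / (2 * b)) / (s * a - Complex.I * b)
      = ((s / (2 * a) - Complex.I / (2 * b)) * (s * a - Complex.I * b)
        - (s * a + Complex.I * b) * (s / (2 * a) + Complex.I / (2 * b)))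
        / ((s * a + Complex.I * b) * (s * a - Complex.I * b)) := by
    rw [div_sub_div _ _ hP hQ]
  have e2 : (s / (2 * a) - Complex.I / (2 * b)) * (s * a - Complex.I * b)
      - (s * a + Complex.I * b) * (s / (2 * a) + Complex.I / (2 * b))
      = -(Complex.I * s) * (a ^ 2 + b ^ 2) / (a * b) := by
    field_simp
    ring
  have e3 : (s * a + Complex.I * b) * (s * a - Complex.I * b) = (u - a ^ 2) / u := by
    have : (s * a + Complex.I * b) * (s * a - Complex.I * b) = s ^ 2 * a ^ 2 + b ^ 2 := by
      linear_combination (-(b ^ 2) : ℂ) * Complex.I_sq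
    rw [this]
    field_simp
    linear_combination a ^ 2 * hus + u * hab
  have e5 : ((1 - u) / (Complex.I * s)) *
      ((-(Complex.I * s) * (a ^ 2 + b ^ 2) / (a * b)) / ((u - a ^ 2) / u))
      = -((1 - u) * u) / ((a * b) * (u - a ^ 2)) := by
    rw [hab, div_div_eq_mul_div]
    field_simp
  rw [e1, e2, e3, e5]
  rw [show a ^ 2 - u = -(u - a ^ 2) by ring, div_neg]
  obtain ⟨d, hdd⟩ : ∃ d : ℂ, d = u - a ^ 2 := ⟨_, rfl⟩
  have hd0 : d ≠ 0 := hdd ▸ huX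
  rw [← hdd]
  field_simp
  linear_combination (d + 2 * a ^ 2) * hab + (2 - 2 * a ^ 2 - 2 * u) * hdd

lemma st19_alg2 (u s a b : ℂ) (ha : a ≠ 0) (hb : b ≠ 0)
    (hab : a ^ 2 + b ^ 2 = 1) (hus : u * s ^ 2 = u - 1)
    (hu0 : u ≠ 0) (hs0 : s ≠ 0) (hXu : a ^ 2 - u ≠ 0)
    (hP : s * a + Complex.I * b ≠ 0) (hQ : s * a - Complex.I * b ≠ 0) :
    -(((b / (2 * a) - a / (2 * b)) * (a ^ 2 - u) - a * b * 1) / (a ^ 2 - u) ^ 2)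
      - 1 / (a * b)
      + ((1 - 2 * u) / (2 * (Complex.I * u * s))) *
        ((s / (2 * a) - Complex.I / (2 * b)) / (s * a + Complex.I * b)
          - (s / (2 * a) + Complex.I / (2 * b)) / (s * a - Complex.I * b))
    = a * b / ((a ^ 2 - u) * (a ^ 2 - u)) := by
  have hI : Complex.I ≠ 0 := Complex.I_ne_zero
  have huX : u - a ^ 2 ≠ 0 := fun h => hXu (by linear_combination -h)
  have e1 : (s / (2 * a) - Complex.I / (2 * b)) / (s * a + Complex.I * b)
      - (s / (2 * a) + Complex.I / (2 * b)) / (s * a - Complex.I * b)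
      = ((s / (2 * a) - Complex.I / (2 * b)) * (s * a - Complex.I * b)
        - (s * a + Complex.I * b) * (s / (2 * a) + Complex.I / (2 * b)))
        / ((s * a + Complex.I * b) * (s * a - Complex.I * b)) := by
    rw [div_sub_div _ _ hP hQ]
  have e2 : (s / (2 * a) - Complex.I / (2 * b)) * (s * a - Complex.I * b)
      - (s * a + Complex.I * b) * (s / (2 * a) + Complex.I / (2 * b))
      = -(Complex.I * s) * (a ^ 2 + b ^ 2) / (a * b) := by
    field_simp
    ring
  have e3 : (s * a + Complex.I * b) * (s * a - Complex.I * b) = (u - a ^ 2) / u := by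
    have h : (s * a + Complex.I * b) * (s * a - Complex.I * b) = s ^ 2 * a ^ 2 + b ^ 2 := by
      linear_combination (-(b ^ 2) : ℂ) * Complex.I_sq
    rw [h]
    field_simp
    linear_combination a ^ 2 * hus + u * hab
  rw [e1, e2, e3, hab]
  obtain ⟨d, hdd⟩ : ∃ d : ℂ, d = u - a ^ 2 := ⟨_, rfl⟩
  have hd0 : d ≠ 0 := hdd ▸ huX
  rw [← hdd, show a ^ 2 - u = -d by rw [hdd]; ring]
  rw [st19_e5 u s a b d ha hb hd0 hu0 hs0]
  field_simp
  have hD : (2 * a * (2 * b) * d ^ 2 * (a * b)) ≠ 0 := by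
    simp [mul_ne_zero_iff, ha, hb, hd0]
  linear_combination d * hab - 2 * d * hdd


lemma st19_facts (u : ℂ) (hu : u ∉ Complex.ofReal '' Set.Icc (0 : ℝ) 1)
    (s : ℂ) (hs : s = ((1 : ℂ) - 1 / u) ^ ((1 : ℂ) / 2)) :
    u ≠ 0 ∧ s ^ 2 = 1 - 1 / u ∧ 0 < s.re := by
  have hu0 : u ≠ 0 := by
    rintro rfl
    exact hu ⟨0, by norm_num⟩
  have hz : (1 - 1 / u) ∈ Complex.slitPlane := by
    by_contra h
    rw [Complex.mem_slitPlane_iff] at h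
    push_neg at h
    obtain ⟨hre, him⟩ := h
    set z := 1 - 1 / u with hzdef
    have hzr : z = (z.re : ℂ) := Complex.ext rfl (by simp [him])
    have h1z : (1 : ℝ) - z.re > 0 := by linarith
    have hinv : 1 / u = ((1 - z.re : ℝ) : ℂ) := by
      push_cast
      rw [← hzr]
      ring
    have huval : u = (((1 - z.re)⁻¹ : ℝ) : ℂ) := by
      have : u⁻¹ = ((1 - z.re : ℝ) : ℂ) := by rw [← one_div]; exact hinv
      rw [← inv_inv u, this]
      push_cast
      ring
    apply hu
    refine ⟨(1 - z.re)⁻¹, ⟨?_, ?_⟩, huval.symm⟩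
    · positivity
    · rw [inv_le_one_iff₀]; right; linarith
  have hz0 : (1 : ℂ) - 1 / u ≠ 0 := Complex.slitPlane_ne_zero hz
  constructor
  · exact hu0
  constructor
  · rw [hs, show ((1 : ℂ) / 2) = (((2 : ℕ) : ℂ))⁻¹ by norm_num]
    rw [Complex.cpow_nat_inv_pow _ two_ne_zero]
  · rw [hs, show ((1 : ℂ) / 2) = ((2 : ℂ))⁻¹ by norm_num]
    rw [Complex.cpow_inv_two_re]
    apply Real.sqrt_pos.2
    rcases Complex.mem_slitPlane_iff.1 hz with h | h
    · have := norm_nonneg (1 - 1 / u)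
      linarith
    · have h2 := Complex.abs_re_lt_norm.2 h
      have := abs_le.1 h2.le
      have h3 : |(1 - 1 / u).re| < ‖1 - 1 / u‖ := h2
      have := neg_abs_le (1 - 1 / u).re
      linarith [neg_lt_of_abs_lt h3]


lemma st19_memP {s : ℂ} (hre : 0 < s.re) (y : ℝ) (hy : y ∈ Set.Icc (0:ℝ) 1) :
    s * (Real.sqrt y : ℂ) + Complex.I * (Real.sqrt (1 - y) : ℂ) ∈ Complex.slitPlane := by
  rcases eq_or_lt_of_le hy.1 with h | h
  · rw [Complex.mem_slitPlane_iff]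
    right
    simp [← h, Complex.add_im, Complex.mul_im]
  · rw [Complex.mem_slitPlane_iff]
    left
    have : (s * (Real.sqrt y : ℂ) + Complex.I * (Real.sqrt (1 - y) : ℂ)).re
        = s.re * Real.sqrt y := by
      simp [Complex.add_re, Complex.mul_re]
    rw [this]
    exact mul_pos hre (Real.sqrt_pos.2 h)

lemma st19_memQ {s : ℂ} (hre : 0 < s.re) (y : ℝ) (hy : y ∈ Set.Icc (0:ℝ) 1) :
    s * (Real.sqrt y : ℂ) - Complex.I * (Real.sqrt (1 - y) : ℂ) ∈ Complex.slitPlane := by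
  rcases eq_or_lt_of_le hy.1 with h | h
  · rw [Complex.mem_slitPlane_iff]
    right
    simp [← h, Complex.sub_im, Complex.mul_im]
  · rw [Complex.mem_slitPlane_iff]
    left
    have : (s * (Real.sqrt y : ℂ) - Complex.I * (Real.sqrt (1 - y) : ℂ)).re
        = s.re * Real.sqrt y := by
      simp [Complex.sub_re, Complex.mul_re]
    rw [this]
    exact mul_pos hre (Real.sqrt_pos.2 h)


-- derivative building blocks
lemma st19_hax {x : ℝ} (hx0 : 0 < x) :
    HasDerivAt (fun y : ℝ => (Real.sqrt y : ℂ)) (((1 / (2 * Real.sqrt x) : ℝ)) : ℂ) x :=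
  (Real.hasDerivAt_sqrt hx0.ne').ofReal_comp

lemma st19_hbx {x : ℝ} (hx1 : x < 1) :
    HasDerivAt (fun y : ℝ => (Real.sqrt (1 - y) : ℂ)) (((-(1 / (2 * Real.sqrt (1 - x))) : ℝ)) : ℂ) x := by
  have h1 : HasDerivAt (fun y : ℝ => 1 - y) (-1) x := by
    simpa using (hasDerivAt_id x).const_sub 1
  have h2 := (Real.hasDerivAt_sqrt (by linarith : (1:ℝ) - x ≠ 0)).comp x h1
  have h3 : HasDerivAt (fun y : ℝ => Real.sqrt (1 - y)) (-(1 / (2 * Real.sqrt (1 - x)))) x := by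
    refine h2.congr_deriv ?_
    ring
  exact h3.ofReal_comp

lemma st19_harc {x : ℝ} (hx0 : 0 < x) (hx1 : x < 1) :
    HasDerivAt (fun y : ℝ => ((Real.arcsin (2 * y - 1) : ℝ) : ℂ))
      (((2 / (2 * (Real.sqrt x * Real.sqrt (1 - x))) : ℝ)) : ℂ) x := by
  have h1 : HasDerivAt (fun y : ℝ => 2 * y - 1) 2 x := by
    simpa using ((hasDerivAt_id x).const_mul 2).sub_const 1
  have hne1 : 2 * x - 1 ≠ -1 := by intro h; nlinarith
  have hne2 : 2 * x - 1 ≠ 1 := by intro h; nlinarith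
  have h2 := (Real.hasDerivAt_arcsin hne1 hne2).comp x h1
  have hsq : Real.sqrt (1 - (2 * x - 1) ^ 2) = 2 * (Real.sqrt x * Real.sqrt (1 - x)) := by
    have e : 1 - (2 * x - 1) ^ 2 = (2 * (Real.sqrt x * Real.sqrt (1 - x))) ^ 2 := by
      have h1' : Real.sqrt x ^ 2 = x := Real.sq_sqrt hx0.le
      have h2' : Real.sqrt (1 - x) ^ 2 = 1 - x := Real.sq_sqrt (by linarith)
      nlinarith [h1', h2']
    rw [e, Real.sqrt_sq (by positivity)]
  have h3 : HasDerivAt (fun y : ℝ => Real.arcsin (2 * y - 1))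
      (2 / (2 * (Real.sqrt x * Real.sqrt (1 - x)))) x := by
    refine h2.congr_deriv ?_
    rw [hsq]
    ring
  exact h3.ofReal_comp

lemma st19_integrable (u v : ℂ) (hxu : ∀ y : ℝ, y ∈ Set.Icc (0:ℝ) 1 → (y:ℂ) ≠ u)
    (hxv : ∀ y : ℝ, y ∈ Set.Icc (0:ℝ) 1 → (y:ℂ) ≠ v) :
    IntervalIntegrable (fun y : ℝ =>
      (Real.sqrt y : ℂ) * (Real.sqrt (1 - y) : ℂ) / (((y:ℂ) - u) * ((y:ℂ) - v)))
      MeasureTheory.volume 0 1 := by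
  apply ContinuousOn.intervalIntegrable
  rw [Set.uIcc_of_le (by norm_num : (0:ℝ) ≤ 1)]
  apply ContinuousOn.div
  · fun_prop
  · fun_prop
  · intro y hy
    exact mul_ne_zero (sub_ne_zero.2 (hxu y hy)) (sub_ne_zero.2 (hxv y hy))

lemma st19_G (u s : ℂ) (hu0 : u ≠ 0) (hs0 : s ≠ 0) (hre : 0 < s.re)
    (hus : u * s ^ 2 = u - 1)
    (hxu : ∀ y : ℝ, y ∈ Set.Icc (0:ℝ) 1 → (y:ℂ) ≠ u) :
    ∫ y in (0:ℝ)..1, (Real.sqrt y : ℂ) * (Real.sqrt (1 - y) : ℂ) / ((y:ℂ) - u)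
      = Real.pi * (1 / 2 - u + u * s) := by
  set F : ℝ → ℂ := fun y =>
    (Real.sqrt y : ℂ) * (Real.sqrt (1 - y) : ℂ)
    + (1 / 2 - u) * ((Real.arcsin (2 * y - 1) : ℝ) : ℂ)
    + ((1 - u) / (Complex.I * s)) *
        (Complex.log (s * (Real.sqrt y : ℂ) + Complex.I * (Real.sqrt (1 - y) : ℂ))
          - Complex.log (s * (Real.sqrt y : ℂ) - Complex.I * (Real.sqrt (1 - y) : ℂ))) with hFdef
  have hcont : ContinuousOn F (Set.Icc (0:ℝ) 1) := by
    apply ContinuousOn.add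
    apply ContinuousOn.add
    · fun_prop
    · exact (continuous_const.mul (Complex.continuous_ofReal.comp
        (Real.continuous_arcsin.comp (by continuity)))).continuousOn
    · apply ContinuousOn.mul continuousOn_const
      apply ContinuousOn.sub
      · apply ContinuousOn.clog
        · fun_prop
        · exact fun y hy => st19_memP hre y hy
      · apply ContinuousOn.clog
        · fun_prop
        · exact fun y hy => st19_memQ hre y hy
  have hint : IntervalIntegrable
      (fun y : ℝ => (Real.sqrt y : ℂ) * (Real.sqrt (1 - y) : ℂ) / ((y:ℂ) - u))
      MeasureTheory.volume 0 1 := by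
    apply ContinuousOn.intervalIntegrable
    rw [Set.uIcc_of_le (by norm_num : (0:ℝ) ≤ 1)]
    apply ContinuousOn.div
    · fun_prop
    · fun_prop
    · exact fun y hy => sub_ne_zero.2 (hxu y hy)
  have hderiv : ∀ y ∈ Set.Ioo (0:ℝ) 1,
      HasDerivWithinAt F ((Real.sqrt y : ℂ) * (Real.sqrt (1 - y) : ℂ) / ((y:ℂ) - u))
        (Set.Ioi y) y := by
    intro y hy
    obtain ⟨hy0, hy1⟩ := hy
    have hyIcc : y ∈ Set.Icc (0:ℝ) 1 := ⟨hy0.le, hy1.le⟩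
    have ha0 : (0:ℝ) < Real.sqrt y := Real.sqrt_pos.2 hy0
    have hb0 : (0:ℝ) < Real.sqrt (1 - y) := Real.sqrt_pos.2 (by linarith)
    have hPd := ((st19_hax hy0).const_mul s).add ((st19_hbx hy1).const_mul Complex.I)
    have hQd := ((st19_hax hy0).const_mul s).sub ((st19_hbx hy1).const_mul Complex.I)
    have hlogP := hPd.clog_real (st19_memP hre y hyIcc)
    have hlogQ := hQd.clog_real (st19_memQ hre y hyIcc)
    have hT1 := (st19_hax hy0).mul (st19_hbx hy1)
    have hT2 := (st19_harc hy0 hy1).const_mul ((1:ℂ) / 2 - u)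
    have hT3 := (hlogP.sub hlogQ).const_mul ((1 - u) / (Complex.I * s))
    have hFD := (hT1.add hT2).add hT3
    apply HasDerivAt.hasDerivWithinAt
    refine hFD.congr_deriv (Eq.symm ?_)
    -- algebra
    have haC : ((y:ℝ):ℂ) = ((Real.sqrt y : ℝ):ℂ) ^ 2 := by
      norm_cast
      exact (Real.sq_sqrt hy0.le).symm
    have hbC : ((Real.sqrt (1 - y) : ℝ):ℂ) ^ 2 = 1 - ((Real.sqrt y : ℝ):ℂ) ^ 2 := by
      rw [← haC]
      norm_cast
      exact Real.sq_sqrt (by linarith)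
    have haNe : ((Real.sqrt y : ℝ):ℂ) ≠ 0 := by exact_mod_cast ha0.ne'
    have hbNe : ((Real.sqrt (1 - y) : ℝ):ℂ) ≠ 0 := by exact_mod_cast hb0.ne'
    have hXu : ((Real.sqrt y : ℝ):ℂ) ^ 2 - u ≠ 0 := by
      rw [← haC]; exact sub_ne_zero.2 (hxu y hyIcc)
    have halg := st19_alg u s ((Real.sqrt y : ℝ):ℂ) ((Real.sqrt (1 - y) : ℝ):ℂ)
      haNe hbNe (by rw [hbC]; ring) hus hu0 hs0 hXu
      (Complex.slitPlane_ne_zero (st19_memP hre y hyIcc))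
      (Complex.slitPlane_ne_zero (st19_memQ hre y hyIcc))
    rw [haC]
    push_cast
    simp only [Pi.add_apply, Pi.sub_apply, Pi.mul_apply]
    linear_combination -halg
  have key := intervalIntegral.integral_eq_sub_of_hasDeriv_right_of_le
    (by norm_num : (0:ℝ) ≤ 1) hcont hderiv hint
  rw [key, hFdef]
  simp only [Real.sqrt_zero, Real.sqrt_one]
  norm_num
  rw [Complex.log_I, Complex.log_neg_I]
  have hI : Complex.I ≠ 0 := Complex.I_ne_zero
  field_simp
  linear_combination (-4) * hus

lemma st19_G2 (u s : ℂ) (hu0 : u ≠ 0) (hs0 : s ≠ 0) (hre : 0 < s.re)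
    (hus : u * s ^ 2 = u - 1)
    (hxu : ∀ y : ℝ, y ∈ Set.Icc (0:ℝ) 1 → (y:ℂ) ≠ u) :
    ∫ y in (0:ℝ)..1, (Real.sqrt y : ℂ) * (Real.sqrt (1 - y) : ℂ) / (((y:ℂ) - u) * ((y:ℂ) - u))
      = Real.pi * ((2 * u - 1) / (2 * (u * s)) - 1) := by
  set F : ℝ → ℂ := fun y =>
    -((Real.sqrt y : ℂ) * (Real.sqrt (1 - y) : ℂ) / ((y:ℂ) - u))
    - ((Real.arcsin (2 * y - 1) : ℝ) : ℂ)
    + ((1 - 2 * u) / (2 * (Complex.I * u * s))) *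
        (Complex.log (s * (Real.sqrt y : ℂ) + Complex.I * (Real.sqrt (1 - y) : ℂ))
          - Complex.log (s * (Real.sqrt y : ℂ) - Complex.I * (Real.sqrt (1 - y) : ℂ))) with hFdef
  have hcont : ContinuousOn F (Set.Icc (0:ℝ) 1) := by
    apply ContinuousOn.add
    apply ContinuousOn.sub
    · apply ContinuousOn.neg
      apply ContinuousOn.div
      · fun_prop
      · fun_prop
      · exact fun y hy => sub_ne_zero.2 (hxu y hy)
    · exact (Complex.continuous_ofReal.comp
        (Real.continuous_arcsin.comp (by continuity))).continuousOn
    · apply ContinuousOn.mul continuousOn_const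
      apply ContinuousOn.sub
      · apply ContinuousOn.clog
        · fun_prop
        · exact fun y hy => st19_memP hre y hy
      · apply ContinuousOn.clog
        · fun_prop
        · exact fun y hy => st19_memQ hre y hy
  have hint : IntervalIntegrable
      (fun y : ℝ => (Real.sqrt y : ℂ) * (Real.sqrt (1 - y) : ℂ) / (((y:ℂ) - u) * ((y:ℂ) - u)))
      MeasureTheory.volume 0 1 := by
    apply ContinuousOn.intervalIntegrable
    rw [Set.uIcc_of_le (by norm_num : (0:ℝ) ≤ 1)]
    apply ContinuousOn.div
    · fun_prop
    · fun_prop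
    · intro y hy
      exact mul_ne_zero (sub_ne_zero.2 (hxu y hy)) (sub_ne_zero.2 (hxu y hy))
  have hderiv : ∀ y ∈ Set.Ioo (0:ℝ) 1,
      HasDerivWithinAt F ((Real.sqrt y : ℂ) * (Real.sqrt (1 - y) : ℂ) / (((y:ℂ) - u) * ((y:ℂ) - u)))
        (Set.Ioi y) y := by
    intro y hy
    obtain ⟨hy0, hy1⟩ := hy
    have hyIcc : y ∈ Set.Icc (0:ℝ) 1 := ⟨hy0.le, hy1.le⟩
    have ha0 : (0:ℝ) < Real.sqrt y := Real.sqrt_pos.2 hy0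
    have hb0 : (0:ℝ) < Real.sqrt (1 - y) := Real.sqrt_pos.2 (by linarith)
    have hyu : ((y:ℝ):ℂ) - u ≠ 0 := sub_ne_zero.2 (hxu y hyIcc)
    have hlin : HasDerivAt (fun z : ℝ => ((z:ℝ):ℂ) - u) 1 y := by
      simpa using ((hasDerivAt_id y).ofReal_comp).sub_const u
    have hPd := ((st19_hax hy0).const_mul s).add ((st19_hbx hy1).const_mul Complex.I)
    have hQd := ((st19_hax hy0).const_mul s).sub ((st19_hbx hy1).const_mul Complex.I)
    have hlogP := hPd.clog_real (st19_memP hre y hyIcc)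
    have hlogQ := hQd.clog_real (st19_memQ hre y hyIcc)
    have hT1 := (((st19_hax hy0).mul (st19_hbx hy1)).div hlin hyu).neg
    have hT2 := st19_harc hy0 hy1
    have hT3 := (hlogP.sub hlogQ).const_mul ((1 - 2 * u) / (2 * (Complex.I * u * s)))
    have hFD := (hT1.sub hT2).add hT3
    apply HasDerivAt.hasDerivWithinAt
    refine hFD.congr_deriv (Eq.symm ?_)
    have haC : ((y:ℝ):ℂ) = ((Real.sqrt y : ℝ):ℂ) ^ 2 := by
      norm_cast
      exact (Real.sq_sqrt hy0.le).symm
    have hbC : ((Real.sqrt (1 - y) : ℝ):ℂ) ^ 2 = 1 - ((Real.sqrt y : ℝ):ℂ) ^ 2 := by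
      rw [← haC]
      norm_cast
      exact Real.sq_sqrt (by linarith)
    have haNe : ((Real.sqrt y : ℝ):ℂ) ≠ 0 := by exact_mod_cast ha0.ne'
    have hbNe : ((Real.sqrt (1 - y) : ℝ):ℂ) ≠ 0 := by exact_mod_cast hb0.ne'
    have hXu : ((Real.sqrt y : ℝ):ℂ) ^ 2 - u ≠ 0 := by
      rw [← haC]; exact sub_ne_zero.2 (hxu y hyIcc)
    have halg := st19_alg2 u s ((Real.sqrt y : ℝ):ℂ) ((Real.sqrt (1 - y) : ℝ):ℂ)
      haNe hbNe (by rw [hbC]; ring) hus hu0 hs0 hXu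
      (Complex.slitPlane_ne_zero (st19_memP hre y hyIcc))
      (Complex.slitPlane_ne_zero (st19_memQ hre y hyIcc))
    rw [haC]
    push_cast
    simp only [Pi.add_apply, Pi.sub_apply, Pi.mul_apply]
    linear_combination -halg
  have key := intervalIntegral.integral_eq_sub_of_hasDeriv_right_of_le
    (by norm_num : (0:ℝ) ≤ 1) hcont hderiv hint
  rw [key, hFdef]
  simp only [Real.sqrt_zero, Real.sqrt_one]
  norm_num
  rw [Complex.log_I, Complex.log_neg_I]
  have hI : Complex.I ≠ 0 := Complex.I_ne_zero
  field_simp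
  ring_nf


lemma st19_integrable1 (u : ℂ) (hxu : ∀ y : ℝ, y ∈ Set.Icc (0:ℝ) 1 → (y:ℂ) ≠ u) :
    IntervalIntegrable (fun y : ℝ =>
      (Real.sqrt y : ℂ) * (Real.sqrt (1 - y) : ℂ) / ((y:ℂ) - u))
      MeasureTheory.volume 0 1 := by
  apply ContinuousOn.intervalIntegrable
  rw [Set.uIcc_of_le (by norm_num : (0:ℝ) ≤ 1)]
  apply ContinuousOn.div
  · fun_prop
  · fun_prop
  · exact fun y hy => sub_ne_zero.2 (hxu y hy)


lemma st19_repos {z : ℂ} (h : 0 < z.re) : z ≠ 0 := by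
  intro h0
  rw [h0] at h
  simp at h

/-- the `d = 2` Stieltjes-transform identity. For
`u, v ∈ ℂ \ [0,1]`, with `s = √(1-1/u)`, `t = √(1-1/v)` (principal branch),
`32 / (uv(1+s)(1+t)(s+t)) = (32/π) ∫₀¹ √(x(1-x)) / ((x-u)(x-v)) dx`. -/
theorem stieltjes_transform_d_two
    (u v : ℂ)
    (hu : u ∉ Complex.ofReal '' Set.Icc (0 : ℝ) 1)
    (hv : v ∉ Complex.ofReal '' Set.Icc (0 : ℝ) 1)
    (s t : ℂ)
    (hs : s = ((1 : ℂ) - 1 / u) ^ ((1 : ℂ) / 2))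
    (ht : t = ((1 : ℂ) - 1 / v) ^ ((1 : ℂ) / 2)) :
    32 / (u * v * (1 + s) * (1 + t) * (s + t)) =
      (32 / (Real.pi : ℂ)) *
        ∫ x in (0:ℝ)..1,
          (Real.sqrt (x * (1 - x)) : ℂ) / (((x : ℂ) - u) * ((x : ℂ) - v)) := by
  obtain ⟨hu0, husq, hsre⟩ := st19_facts u hu s hs
  obtain ⟨hv0, hvsq, htre⟩ := st19_facts v hv t ht
  have hs0 : s ≠ 0 := st19_repos hsre
  have ht0 : t ≠ 0 := st19_repos htre
  have hus : u * s ^ 2 = u - 1 := by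
    rw [husq]; field_simp
  have hvt : v * t ^ 2 = v - 1 := by
    rw [hvsq]; field_simp
  have hxu : ∀ y : ℝ, y ∈ Set.Icc (0:ℝ) 1 → (y:ℂ) ≠ u := fun y hy h => hu ⟨y, hy, h⟩
  have hxv : ∀ y : ℝ, y ∈ Set.Icc (0:ℝ) 1 → (y:ℂ) ≠ v := fun y hy h => hv ⟨y, hy, h⟩
  have h1s : (1 : ℂ) + s ≠ 0 := st19_repos (by simp [Complex.add_re]; linarith)
  have h1t : (1 : ℂ) + t ≠ 0 := st19_repos (by simp [Complex.add_re]; linarith)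
  have hst : s + t ≠ 0 := st19_repos (by simp [Complex.add_re]; linarith)
  have hπ : ((Real.pi : ℝ) : ℂ) ≠ 0 := Complex.ofReal_ne_zero.2 Real.pi_ne_zero
  have hsplit : ∫ x in (0:ℝ)..1,
      (Real.sqrt (x * (1 - x)) : ℂ) / (((x : ℂ) - u) * ((x : ℂ) - v))
      = ∫ x in (0:ℝ)..1,
      (Real.sqrt x : ℂ) * (Real.sqrt (1 - x) : ℂ) / (((x : ℂ) - u) * ((x : ℂ) - v)) := by
    apply intervalIntegral.integral_congr
    intro y hy
    rw [Set.uIcc_of_le (by norm_num : (0:ℝ) ≤ 1)] at hy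
    simp only
    rw [Real.sqrt_mul hy.1]
    push_cast
    ring
  rw [hsplit]
  by_cases huv : u = v
  · subst huv
    have hts : t = s := by rw [ht, hs]
    subst hts
    rw [st19_G2 u t hu0 ht0 htre hus hxu]
    rw [div_eq_iff (by simp [mul_ne_zero_iff, hu0, h1t, hst])]
    field_simp
    linear_combination (2 + 4*u + 4*u*t) * hus
  · have hsplit2 : ∫ x in (0:ℝ)..1,
        (Real.sqrt x : ℂ) * (Real.sqrt (1 - x) : ℂ) / (((x : ℂ) - u) * ((x : ℂ) - v))
        = ∫ x in (0:ℝ)..1, (1 / (u - v)) *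
          ((Real.sqrt x : ℂ) * (Real.sqrt (1 - x) : ℂ) / (((x : ℂ)) - u)
            - (Real.sqrt x : ℂ) * (Real.sqrt (1 - x) : ℂ) / (((x : ℂ)) - v)) := by
      apply intervalIntegral.integral_congr
      intro y hy
      rw [Set.uIcc_of_le (by norm_num : (0:ℝ) ≤ 1)] at hy
      simp only
      have h1 : ((y:ℝ):ℂ) - u ≠ 0 := sub_ne_zero.2 (hxu y hy)
      have h2 : ((y:ℝ):ℂ) - v ≠ 0 := sub_ne_zero.2 (hxv y hy)
      have h3 : u - v ≠ 0 := sub_ne_zero.2 huv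
      field_simp
      ring
    rw [hsplit2, intervalIntegral.integral_const_mul,
      intervalIntegral.integral_sub (st19_integrable1 u hxu) (st19_integrable1 v hxv),
      st19_G u s hu0 hs0 hsre hus hxu, st19_G v t hv0 ht0 htre hvt hxv]
    have h3 : u - v ≠ 0 := sub_ne_zero.2 huv
    rw [div_eq_iff (by simp [mul_ne_zero_iff, hu0, hv0, h1s, h1t, hst])]
    field_simp
    linear_combination (2*v^2*t^2 - 2*v^2 - 2*u*v*t - 2*u*v*s*t - 2*u*v*t^2 - 2*u*v*s) * hus
      + (2*u*v*s + 2*u*v*t + 2*u*v*s*t + 2*u*v - 2*v + 2*u) * hvt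
end
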